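/- arXiv:2203.12665 — 4 statements merged into one kernel-verified Lean document; each statement's English description precedes it below -/
import Mathlib

section
/- If a connected graph G contains a nontrivial bridge xy, then there is no hamiltonian path from x to y in the square G²; in particular G² is not hamiltonian connected. -/
open SimpleGraph Function

variable {V : Type*}

/-- The square of a graph `G`: two distinct vertices are adjacent iff their distance
in `G` is at most 2, i.e. they are adjacent in `G` or have a common neighbor. -/
def GraphSquare (G : SimpleGraph V) : SimpleGraph V where
  Adj u v := u ≠ v ∧ (G.Adj u v ∨ ∃ w, G.Adj u w ∧ G.Adj w v)
  symm := by
    constructor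
    rintro u v ⟨hne, h | ⟨w, h1, h2⟩⟩
    · exact ⟨hne.symm, Or.inl h.symm⟩
    · exact ⟨hne.symm, Or.inr ⟨w, h2.symm, h1.symm⟩⟩
  loopless := ⟨fun v h => h.1 rfl⟩

/-- A leaf of `G` is a vertex with exactly one neighbor. -/
def IsLeafVertex (G : SimpleGraph V) (v : V) : Prop := ∃! w, G.Adj v w

/-- A nontrivial bridge of `G` is a bridge neither of whose endpoints is a leaf. -/
def IsNontrivialBridge (G : SimpleGraph V) (x y : V) : Prop :=
  G.IsBridge s(x, y) ∧ ¬ IsLeafVertex G x ∧ ¬ IsLeafVertex G y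

/-- `bn G i` is the number of nontrivial bridges of `G` incident with `i`. -/
noncomputable def bn (G : SimpleGraph V) (i : V) : ℕ :=
  {v : V | IsNontrivialBridge G i v}.ncard

/-- A cutvertex of a connected graph is a vertex whose removal disconnects the graph. -/
def IsCutVertex (G : SimpleGraph V) (v : V) : Prop :=
  G.Connected ∧ ({u : V | u ≠ v}).Nonempty ∧ ¬ (G.induce {u : V | u ≠ v}).Connected

/-- A block of `G`: a maximal set of vertices inducing a connected subgraph
without a cutvertex of its own. -/
def IsBlock (G : SimpleGraph V) (B : Set V) : Prop :=
  (G.induce B).Connected ∧ (∀ v, ¬ IsCutVertex (G.induce B) v) ∧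
    ∀ C : Set V, B ⊆ C → (G.induce C).Connected →
      (∀ v, ¬ IsCutVertex (G.induce C) v) → C = B

/-- A 2-block of `G`: a block with more than two vertices. -/
def Is2Block (G : SimpleGraph V) (B : Set V) : Prop :=
  IsBlock G B ∧ 2 < B.ncard

/-- The number `k_i` of 2-blocks of `G` containing `i`. -/
noncomputable def numTwoBlocksAt (G : SimpleGraph V) (i : V) : ℕ :=
  {B : Set V | Is2Block G B ∧ i ∈ B}.ncard

/-- The set of cutvertices of `G`. -/
def cutvertexSet (G : SimpleGraph V) : Set V := {v | IsCutVertex G v}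

/-- The block-cutvertex graph of `G`: the bipartite graph on the blocks and the
cutvertices of `G`, a block being adjacent to a cutvertex exactly when the
cutvertex belongs to the block. -/
def bcGraph (G : SimpleGraph V) :
    SimpleGraph ({B : Set V // IsBlock G B} ⊕ {v : V // IsCutVertex G v}) where
  Adj a b := ∃ B v, v.1 ∈ B.1 ∧
      ((a = Sum.inl B ∧ b = Sum.inr v) ∨ (a = Sum.inr v ∧ b = Sum.inl B))
  symm := by
    constructor
    rintro a b ⟨B, v, hv, (⟨rfl, rfl⟩ | ⟨rfl, rfl⟩)⟩
    · exact ⟨B, v, hv, Or.inr ⟨rfl, rfl⟩⟩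
    · exact ⟨B, v, hv, Or.inl ⟨rfl, rfl⟩⟩
  loopless := by
    constructor
    rintro a ⟨B, v, hv, (⟨rfl, h⟩ | ⟨rfl, h⟩)⟩ <;> simp at h

/-- A graph is hamiltonian if it contains a hamiltonian cycle. -/
def HasHamiltonianCycle (H : SimpleGraph V) : Prop :=
  letI : DecidableEq V := Classical.decEq V
  ∃ (a : V) (c : H.Walk a a), c.IsHamiltonianCycle

/-- There is a hamiltonian path from `x` to `y` in `H`. -/
def HasHamiltonianPath (H : SimpleGraph V) (x y : V) : Prop :=
  letI : DecidableEq V := Classical.decEq V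
  ∃ p : H.Walk x y, p.IsHamiltonian

/-- A graph is hamiltonian connected if any two distinct vertices are joined by a
hamiltonian path. -/
def HamiltonianConnected (H : SimpleGraph V) : Prop :=
  ∀ u v : V, u ≠ v → HasHamiltonianPath H u v

/-- A 2-connected graph (equivalently, a "2-block" regarded as a graph on its own):
a connected graph on at least three vertices without a cutvertex. -/
def IsTwoConnectedGraph [Fintype V] (G : SimpleGraph V) : Prop :=
  3 ≤ Fintype.card V ∧ G.Connected ∧ ∀ v, ¬ IsCutVertex G v

/-- A graph `H` on `n` vertices is panconnected if for every pair of distinct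
vertices `u`, `v` and every `l` with `dist u v ≤ l ≤ n - 1` there is a `u`-`v`
path of length exactly `l`. -/
def Panconnected [Fintype V] (H : SimpleGraph V) : Prop :=
  ∀ u v : V, u ≠ v → ∀ l : ℕ, H.dist u v ≤ l → l ≤ Fintype.card V - 1 →
    ∃ p : H.Walk u v, p.IsPath ∧ p.length = l

/-- A graph `H` on `n` vertices is vertex-pancyclic if every vertex lies on a cycle
of length `l` for every `3 ≤ l ≤ n`. -/
def VertexPancyclic [Fintype V] (H : SimpleGraph V) : Prop :=
  ∀ v : V, ∀ l : ℕ, 3 ≤ l → l ≤ Fintype.card V →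
    ∃ c : H.Walk v v, c.IsCycle ∧ c.length = l

/-- A caterpillar: a tree in which every vertex is within distance 1 of a spine path. -/
def IsCaterpillar (T : SimpleGraph V) : Prop :=
  T.IsTree ∧ ∃ (u v : V) (P : T.Walk u v), P.IsPath ∧
    ∀ w : V, w ∈ P.support ∨ ∃ z ∈ P.support, T.Adj w z

/-- An innerblock of `G`: a block which is not an endblock, i.e. a block containing
at least two cutvertices of `G`. -/
def IsInnerBlock (G : SimpleGraph V) (B : Set V) : Prop :=
  IsBlock G B ∧ 2 ≤ {i : V | IsCutVertex G i ∧ i ∈ B}.ncard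

/-- A block-chain: a connected graph whose block-cutvertex graph is a path. -/
def IsBlockChain (G : SimpleGraph V) : Prop :=
  G.Connected ∧ ∃ n : ℕ, Nonempty (bcGraph G ≃g pathGraph n)

/-- Auxiliary walk lemma: a path to `y` starting outside `A` stays outside `A`,
given that every crossing edge has `x` on the `A` side or `y` on the other side,
and `x` is not on the path. -/
private lemma aux_stay_out {H : SimpleGraph V} {A : Set V} {x y : V}
    (hcross : ∀ a b, a ∈ A → b ∉ A → H.Adj a b → a = x ∨ b = y) (hy : y ∉ A) :
    ∀ {u : V} (p : H.Walk u y), p.IsPath → x ∉ p.support → u ∉ A →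
      ∀ b ∈ p.support, b ∉ A := by
  intro u p
  induction p with
  | nil =>
    intro _ _ hu b hb
    simp only [SimpleGraph.Walk.support_nil, List.mem_singleton] at hb
    subst hb; exact hy
  | @cons u w _ h q ih =>
    intro hp hx hu b hb
    rw [SimpleGraph.Walk.cons_isPath_iff] at hp
    rw [SimpleGraph.Walk.support_cons, List.mem_cons] at hb
    rcases hb with rfl | hb
    · exact hu
    · by_cases hw : w ∈ A
      · rcases hcross w u hw hu h.symm with rfl | rfl
        · exact absurd (by
            rw [SimpleGraph.Walk.support_cons]
            exact List.mem_cons_of_mem _ q.start_mem_support) hx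
        · exact absurd q.end_mem_support hp.2
      · exact ih hcross hy hp.1 (fun hxq => hx (by
          rw [SimpleGraph.Walk.support_cons]
          exact List.mem_cons_of_mem _ hxq)) hw b hb

/-- Auxiliary walk lemma: a path to `y ∉ A` starting inside `A` stays inside `A`
until it reaches `y`, given the crossing condition and that `x` is not on the path. -/
private lemma aux_stay_in {H : SimpleGraph V} {A : Set V} {x y : V}
    (hcross : ∀ a b, a ∈ A → b ∉ A → H.Adj a b → a = x ∨ b = y) (hy : y ∉ A) :
    ∀ {u : V} (p : H.Walk u y), p.IsPath → x ∉ p.support → u ∈ A →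
      ∀ b ∈ p.support, b ∈ A ∨ b = y := by
  intro u p
  induction p with
  | nil =>
    intro _ _ _ b hb
    simp only [SimpleGraph.Walk.support_nil, List.mem_singleton] at hb
    exact Or.inr hb
  | @cons u w _ h q ih =>
    intro hp hx hu b hb
    rw [SimpleGraph.Walk.cons_isPath_iff] at hp
    rw [SimpleGraph.Walk.support_cons, List.mem_cons] at hb
    rcases hb with rfl | hb
    · exact Or.inl hu
    · by_cases hw : w ∈ A
      · exact ih hcross hy hp.1 (fun hxq => hx (by
          rw [SimpleGraph.Walk.support_cons]
          exact List.mem_cons_of_mem _ hxq)) hw b hb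
      · rcases hcross u w hu hw h with rfl | rfl
        · exact absurd (by
            rw [SimpleGraph.Walk.support_cons]
            exact List.mem_cons_self) hx
        · -- q : H.Walk y y is a path, hence nil
          have hq : q = SimpleGraph.Walk.nil := SimpleGraph.Walk.isPath_iff_eq_nil.mp hp.1
          subst hq
          simp only [SimpleGraph.Walk.support_nil, List.mem_singleton] at hb
          exact Or.inr hb

/-- If a connected graph `G` has a nontrivial bridge `xy`, then there is no hamiltonian
path from `x` to `y` in `G²`; in particular `G²` is not hamiltonian connected. -/
theorem not_hamiltonian_connected_of_nontrivial_bridge [Fintype V] (G : SimpleGraph V)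
    (hG : G.Connected) (x y : V) (hxy : IsNontrivialBridge G x y) :
    ¬ HasHamiltonianPath (GraphSquare G) x y ∧
      ¬ HamiltonianConnected (GraphSquare G) := by
  classical
  obtain ⟨hbr, hlx, hly⟩ := hxy
  rw [SimpleGraph.isBridge_iff] at hbr
  have hadj : G.Adj x y :=
    ((SimpleGraph.isBridge_iff.mpr hbr).reachable_iff_adj).mp (hG.preconnected x y)
  have hnr := hbr
  have hne : x ≠ y := hadj.ne
  set G' : SimpleGraph V := G \ SimpleGraph.fromEdgeSet {s(x, y)} with hG'
  set A : Set V := {u | G'.Reachable x u} with hA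
  have hxA : x ∈ A := SimpleGraph.Reachable.refl x
  have hyA : y ∉ A := hnr
  -- adjacency in G' characterization
  have hG'adj : ∀ a b, G.Adj a b → s(a, b) ≠ s(x, y) → G'.Adj a b := by
    intro a b hab hs
    rw [hG', SimpleGraph.sdiff_adj, SimpleGraph.fromEdgeSet_adj]
    exact ⟨hab, fun hc => hs hc.1⟩
  -- a G-edge from A to outside A must be the bridge, oriented as (x, y)
  have hGcross : ∀ a b, a ∈ A → b ∉ A → G.Adj a b → a = x ∧ b = y := by
    intro a b ha hb hab
    by_cases hs : s(a, b) = s(x, y)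
    · rw [Sym2.eq_iff] at hs
      rcases hs with ⟨rfl, rfl⟩ | ⟨h1, h2⟩
      · exact ⟨rfl, rfl⟩
      · subst h2; exact absurd hxA hb
    · exact absurd (ha.trans (hG'adj a b hab hs).reachable) hb
  -- crossing edges of the square
  have hcross : ∀ a b, a ∈ A → b ∉ A → (GraphSquare G).Adj a b → a = x ∨ b = y := by
    rintro a b ha hb ⟨-, hab | ⟨w, h1, h2⟩⟩
    · exact Or.inl (hGcross a b ha hb hab).1
    · by_cases hw : w ∈ A
      · exact Or.inr (hGcross w b hw hb h2).2
      · exact Or.inl (hGcross a w ha hw h1).1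
  -- x has a neighbor x' ≠ y, which lies in A
  have hx' : ∃ x', G.Adj x x' ∧ x' ≠ y := by
    by_contra hc
    push_neg at hc
    exact hlx ⟨y, hadj, fun z hz => hc z hz⟩
  obtain ⟨x', hxx', hx'y⟩ := hx'
  have hx'A : x' ∈ A := by
    refine (hG'adj x x' hxx' ?_).reachable
    intro hc
    rw [Sym2.eq_iff] at hc
    rcases hc with ⟨-, h2⟩ | ⟨h1, -⟩
    · exact hx'y h2
    · exact hne h1
  have hx'x : x' ≠ x := hxx'.ne'
  -- y has a neighbor y' ≠ x, which lies outside A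
  have hy' : ∃ y', G.Adj y y' ∧ y' ≠ x := by
    by_contra hc
    push_neg at hc
    exact hly ⟨x, hadj.symm, fun z hz => hc z hz⟩
  obtain ⟨y', hyy', hy'x⟩ := hy'
  have hy'A : y' ∉ A := by
    intro hc
    refine hyA (hc.trans (hG'adj y' y hyy'.symm ?_).reachable)
    intro hs
    rw [Sym2.eq_iff] at hs
    rcases hs with ⟨h1, -⟩ | ⟨-, h2⟩
    · exact hy'x h1
    · exact hne h2.symm
  have hy'y : y' ≠ y := hyy'.ne'
  -- main part
  have main : ¬ HasHamiltonianPath (GraphSquare G) x y := by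
    rintro ⟨p, hp⟩
    have hpath : p.IsPath := hp.isPath
    cases p with
    | nil => exact hne rfl
    | @cons _ w _ h q =>
      rw [SimpleGraph.Walk.cons_isPath_iff] at hpath
      by_cases hw : w ∈ A
      · have := aux_stay_in hcross hyA q hpath.1 hpath.2 hw y'
          (by have := hp.mem_support y'
              rw [SimpleGraph.Walk.support_cons, List.mem_cons] at this
              exact this.resolve_left hy'x)
        rcases this with h1 | h1
        · exact hy'A h1
        · exact hy'y h1
      · have := aux_stay_out hcross hyA q hpath.1 hpath.2 hw x'
          (by have := hp.mem_support x'
              rw [SimpleGraph.Walk.support_cons, List.mem_cons] at this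
              exact this.resolve_left hx'x)
        exact this hx'A
  exact ⟨main, fun hc => main (hc x y hne)⟩
end

section
/- Let T be a caterpillar with at least three vertices and let P = x₁x₂...x_m be a longest path in T. Then the square T² contains a hamiltonian cycle which contains the edges x₁x₂ and x_{m−1}x_m and, for each j = 2, 3, ..., m−1, a further edge u_j v_j such that u_j and v_j are neighbors of x_j in T, these edges all being pairwise distinct. -/
open SimpleGraph Function

variable {V : Type*}

namespace CatAux

/-- consecutive pairs of a list, as unordered pairs -/
def pairs : List V → List (Sym2 V)
  | [] => []
  | [_] => []
  | a :: b :: t => s(a, b) :: pairs (b :: t)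

@[simp] lemma pairs_nil : pairs ([] : List V) = [] := rfl
@[simp] lemma pairs_single (a : V) : pairs [a] = [] := rfl
@[simp] lemma pairs_cons_cons (a b : V) (t : List V) :
    pairs (a :: b :: t) = s(a, b) :: pairs (b :: t) := rfl

lemma pairs_append (l₁ : List V) (a : V) (l₂ : List V) :
    pairs (l₁ ++ a :: l₂) = pairs (l₁ ++ [a]) ++ pairs (a :: l₂) := by
  induction l₁ with
  | nil => simp
  | cons x l₁ ih =>
    cases l₁ with
    | nil => simp
    | cons y l₁ => simpa using ih

lemma pairs_reverse (l : List V) : pairs l.reverse = (pairs l).reverse := by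
  induction l with
  | nil => rfl
  | cons a t ih =>
    cases t with
    | nil => rfl
    | cons b t' =>
      have h1 : (a :: b :: t').reverse = (b :: t').reverse ++ [a] := by simp
      rw [h1]
      have h2 : (b :: t').reverse = t'.reverse ++ [b] := by simp
      calc pairs ((b :: t').reverse ++ [a])
          = pairs ((t'.reverse ++ [b]) ++ [a]) := by rw [h2]
        _ = pairs (t'.reverse ++ [b]) ++ pairs [b, a] := by
              have := pairs_append (t'.reverse) b [a]; simpa using this
        _ = (pairs (b :: t')).reverse ++ [s(a, b)] := by
              rw [← h2, ih]; simp [Sym2.eq_swap]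
        _ = (pairs (a :: b :: t')).reverse := by simp

lemma mem_pairs_append_left {e : Sym2 V} {l₁ : List V} (l₂ : List V)
    (h : e ∈ pairs l₁) : e ∈ pairs (l₁ ++ l₂) := by
  induction l₁ with
  | nil => simp [pairs] at h
  | cons a t ih =>
    cases t with
    | nil => simp [pairs] at h
    | cons b t' =>
      simp only [pairs, List.cons_append, List.mem_cons] at h ⊢
      rcases h with h | h
      · exact Or.inl h
      · exact Or.inr (ih h)

lemma mem_pairs_append_right {e : Sym2 V} (l₁ : List V) {l₂ : List V}
    (h : e ∈ pairs l₂) : e ∈ pairs (l₁ ++ l₂) := by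
  induction l₁ with
  | nil => simpa using h
  | cons a t ih =>
    cases ht : t ++ l₂ with
    | nil => rw [List.cons_append, ht]; rw [ht] at ih; exact ih
    | cons c t' =>
      rw [List.cons_append, ht]
      simp only [pairs, List.mem_cons]
      rw [ht] at ih
      exact Or.inr ih

lemma head_pair_mem {a b : V} (t : List V) : s(a, b) ∈ pairs (a :: b :: t) := by
  simp [pairs]

lemma pairs_junction {l₁ l₂ : List V} {a b : V}
    (h₁ : l₁.getLast? = some a) (h₂ : l₂.head? = some b) :
    s(a, b) ∈ pairs (l₁ ++ l₂) := by
  induction l₁ with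
  | nil => simp at h₁
  | cons x t ih =>
    cases t with
    | nil =>
      simp only [List.getLast?_singleton, Option.some.injEq] at h₁
      subst h₁
      cases l₂ with
      | nil => simp at h₂
      | cons y t₂ =>
        simp only [List.head?_cons, Option.some.injEq] at h₂
        subst h₂
        exact head_pair_mem t₂
    | cons y t' =>
      rw [List.getLast?_cons_cons] at h₁
      have h3 := ih h₁
      have hgoal : pairs ((x :: y :: t') ++ l₂) = s(x, y) :: pairs ((y :: t') ++ l₂) := rfl
      rw [hgoal]
      exact List.mem_cons_of_mem _ h3

lemma mem_pairs_infix {e : Sym2 V} {l : List V} (h : e ∈ pairs l) :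
    ∃ a b, e = s(a, b) ∧ [a, b] <:+: l := by
  induction l with
  | nil => simp [pairs] at h
  | cons x t ih =>
    cases t with
    | nil => simp [pairs] at h
    | cons y t' =>
      simp only [pairs, List.mem_cons] at h
      rcases h with h | h
      · exact ⟨x, y, h, ⟨[], t', by simp⟩⟩
      · obtain ⟨a, b, he, hinf⟩ := ih h
        exact ⟨a, b, he, hinf.trans (List.infix_cons (List.infix_refl _))⟩

lemma headD_mem_or {l : List V} {d : V} : l.headD d ∈ l ∨ l.headD d = d := by
  cases l with
  | nil => exact Or.inr rfl
  | cons a t => exact Or.inl (by simp)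

def mkWalk (G : SimpleGraph V) : (a b : V) → (l : List V) →
    (h : List.Chain G.Adj a (l ++ [b])) → G.Walk a b
  | _, _, [], h => SimpleGraph.Walk.cons (List.chain_cons.mp h).1 SimpleGraph.Walk.nil
  | _, b, c :: l, h =>
      SimpleGraph.Walk.cons (List.chain_cons.mp h).1
        (mkWalk G c b l (List.chain_cons.mp h).2)

@[simp] lemma mkWalk_support (G : SimpleGraph V) :
    ∀ (a b : V) (l : List V) (h : List.Chain G.Adj a (l ++ [b])),
      (mkWalk G a b l h).support = a :: (l ++ [b])
  | _, _, [], _ => rfl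
  | a, b, c :: l, h => by
      simp [mkWalk, mkWalk_support G c b l (List.chain_cons.mp h).2]

@[simp] lemma mkWalk_edges (G : SimpleGraph V) :
    ∀ (a b : V) (l : List V) (h : List.Chain G.Adj a (l ++ [b])),
      (mkWalk G a b l h).edges = pairs (a :: (l ++ [b]))
  | _, _, [], _ => rfl
  | a, b, c :: l, h => by
      simp [mkWalk, mkWalk_edges G c b l (List.chain_cons.mp h).2, pairs]

variable {T : SimpleGraph V}

/-- In a path, at most one edge contains the initial vertex. -/
lemma filter_edges_start_le_one [DecidableEq V] :
    ∀ {a b : V} (p : T.Walk a b), p.IsPath →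
      (p.edges.filter (fun e => a ∈ e)).length ≤ 1 := by
  intro a b p
  induction p with
  | nil => intro _; simp
  | @cons a c b h p ih =>
    intro hp
    have hp' : p.IsPath := hp.of_cons
    have ha : a ∉ p.support := ((Walk.cons_isPath_iff _ _).mp hp).2
    have hnone : ∀ e ∈ p.edges, a ∉ e := by
      intro e he hae
      induction e using Sym2.inductionOn with
      | hf x y =>
        rcases Sym2.mem_iff.mp hae with rfl | rfl
        · exact ha (p.fst_mem_support_of_mem_edges he)
        · exact ha (p.snd_mem_support_of_mem_edges he)
    have : p.edges.filter (fun e => a ∈ e) = [] := by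
      apply List.filter_eq_nil_iff.mpr
      intro e he
      simpa using hnone e he
    simp only [Walk.edges_cons, List.filter_cons]
    rw [this]
    by_cases hmem : a ∈ s(a, c) <;> simp [hmem]

/-- In a path, at most two edges contain any given vertex. -/
lemma filter_edges_le_two [DecidableEq V] (c : V) :
    ∀ {a b : V} (p : T.Walk a b), p.IsPath →
      (p.edges.filter (fun e => c ∈ e)).length ≤ 2 := by
  intro a b p
  induction p with
  | nil => intro _; simp
  | @cons a d b h p ih =>
    intro hp
    have hp' : p.IsPath := hp.of_cons
    have ha : a ∉ p.support := ((Walk.cons_isPath_iff _ _).mp hp).2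
    simp only [Walk.edges_cons, List.filter_cons]
    by_cases hmem : c ∈ s(a, d)
    · rcases Sym2.mem_iff.mp hmem with rfl | rfl
      · -- c = a : no edge of p contains a
        have : p.edges.filter (fun e => c ∈ e) = [] := by
          apply List.filter_eq_nil_iff.mpr
          intro e he hae
          simp only [decide_eq_true_eq] at hae
          induction e using Sym2.inductionOn with
          | hf x y =>
            rcases Sym2.mem_iff.mp hae with rfl | rfl
            · exact ha (p.fst_mem_support_of_mem_edges he)
            · exact ha (p.snd_mem_support_of_mem_edges he)
        simp [hmem, this]
      · -- c = d : p starts at d, so at most one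
        have h1 := filter_edges_start_le_one p hp'
        rw [if_pos (by simpa using hmem)]
        simpa using h1
    · rw [if_neg (by simpa using hmem)]
      exact ih hp'

lemma two_le_length_filter {α : Type*} [DecidableEq α] {l : List α} {p : α → Bool} {a b : α}
    (ha : a ∈ l) (hb : b ∈ l) (hne : a ≠ b) (hpa : p a) (hpb : p b) :
    2 ≤ (l.filter p).length := by
  have h1 : [a, b].Nodup := by simp [hne]
  have h2 : [a, b] ⊆ l.filter p := by
    intro x hx
    simp only [List.mem_cons, List.not_mem_nil, or_false] at hx
    rcases hx with rfl | rfl <;> exact List.mem_filter.mpr ⟨by assumption, by assumption⟩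
  simpa using (h1.subperm h2).length_le

lemma singleton_isPath {a b : V} (h : T.Adj a b) :
    (Walk.cons h Walk.nil).IsPath := by
  simp [Walk.cons_isPath_iff, h.ne]

/-- In a path `p`, between any two support vertices there is a path inside `p`. -/
lemma path_between_in_support {α β : V} {x y : V} {p : T.Walk α β} (hp : p.IsPath)
    (hx : x ∈ p.support) (hy : y ∈ p.support) [DecidableEq V] :
    ∃ q : T.Walk x y, q.IsPath ∧ q.support ⊆ p.support ∧ q.edges ⊆ p.edges := by
  by_cases hy' : y ∈ (p.dropUntil x hx).support
  · refine ⟨(p.dropUntil x hx).takeUntil y hy', (hp.dropUntil hx).takeUntil hy', ?_, ?_⟩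
    · exact fun z hz => Walk.support_dropUntil_subset _ hx (Walk.support_takeUntil_subset _ hy' hz)
    · exact fun z hz => Walk.edges_dropUntil_subset _ hx (Walk.edges_takeUntil_subset _ hy' hz)
  · have hy2 : y ∈ (p.takeUntil x hx).support := by
      have h0 : y ∈ ((p.takeUntil x hx).append (p.dropUntil x hx)).support := by
        rw [Walk.take_spec p hx]; exact hy
      rcases (Walk.mem_support_append_iff _ _).mp h0 with h | h
      · exact h
      · exact absurd h hy'
    refine ⟨((p.takeUntil x hx).dropUntil y hy2).reverse,
      ((hp.takeUntil hx).dropUntil hy2).reverse, ?_, ?_⟩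
    · rw [Walk.support_reverse]
      intro z hz
      rw [List.mem_reverse] at hz
      exact Walk.support_takeUntil_subset p hx
        (Walk.support_dropUntil_subset _ hy2 hz)
    · rw [Walk.edges_reverse]
      intro e he
      rw [List.mem_reverse] at he
      exact Walk.edges_takeUntil_subset p hx
        (Walk.edges_dropUntil_subset _ hy2 he)

/-- In a tree, if two adjacent vertices lie on a path, the edge between them is on the path. -/
lemma adj_edge_mem_of_mem_support [DecidableEq V] (htree : T.IsTree) {α β : V}
    {p : T.Walk α β} (hp : p.IsPath) {x y : V} (hx : x ∈ p.support) (hy : y ∈ p.support)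
    (hxy : T.Adj x y) : s(x, y) ∈ p.edges := by
  obtain ⟨q, hq, _, hqe⟩ := path_between_in_support hp hx hy
  have huniq := htree.existsUnique_path x y
  have : q = Walk.cons hxy Walk.nil := huniq.unique hq (singleton_isPath hxy)
  apply hqe
  rw [this]
  simp

/-- First hit of a set along a path. -/
lemma exists_first_hit (S : V → Prop) :
    ∀ {a b : V} (W : T.Walk a b), W.IsPath → S b → ¬ S a →
      ∃ (d : V) (W₁ : T.Walk a d), S d ∧ W₁.IsPath ∧
        (∀ x, x ∈ W₁.support → x ∈ W.support) ∧
        (∀ x ∈ W₁.support, S x → x = d) := by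
  intro a b W
  induction W with
  | nil => intro _ hb ha; exact absurd hb ha
  | @cons a c b h W ih =>
    intro hW hb ha
    by_cases hc : S c
    · refine ⟨c, Walk.cons h Walk.nil, hc, singleton_isPath h, ?_, ?_⟩
      · intro x hx
        simp only [Walk.support_cons, List.mem_cons, Walk.support_nil] at hx ⊢
        rcases hx with rfl | hx
        · exact Or.inl rfl
        · simp at hx; subst hx; exact Or.inr W.start_mem_support
      · intro x hx hS
        simp only [Walk.support_cons, Walk.support_nil, List.mem_cons] at hx
        rcases hx with rfl | hx
        · exact absurd hS ha
        · simpa using hx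
    · obtain ⟨d, W₁, hd, hW₁, hsub, hfirst⟩ := ih hW.of_cons hb hc
      have hanotin : a ∉ W₁.support := fun hmem =>
        ((Walk.cons_isPath_iff _ _).mp hW).2 (hsub a hmem)
      refine ⟨d, Walk.cons h W₁, hd, (Walk.cons_isPath_iff _ _).mpr ⟨hW₁, hanotin⟩, ?_, ?_⟩
      · intro x hx
        simp only [Walk.support_cons, List.mem_cons] at hx ⊢
        rcases hx with rfl | hx
        · exact Or.inl rfl
        · exact Or.inr (hsub x hx)
      · intro x hx hS
        simp only [Walk.support_cons, List.mem_cons] at hx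
        rcases hx with rfl | hx
        · exact absurd hS ha
        · exact hfirst x hx hS

/-- A path of length ≥ 2 ending at `b` has a penultimate vertex with two neighbors. -/
lemma penultimate_facts :
    ∀ {a b : V} (p : T.Walk a b), p.IsPath → 2 ≤ p.length →
      ∃ y c, T.Adj y b ∧ T.Adj y c ∧ c ≠ b ∧ y ∈ p.support ∧ y ≠ b := by
  intro a b p
  induction p with
  | nil => intro _ h; simp at h
  | @cons a d b h p ih =>
    intro hp hlen
    by_cases h2 : 2 ≤ p.length
    · obtain ⟨y, c, h1, h2', h3, h4, h5⟩ := ih hp.of_cons h2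
      exact ⟨y, c, h1, h2', h3, by simp [Walk.support_cons, h4], h5⟩
    · -- p.length = 1
      have hl : p.length = 1 := by
        simp only [Walk.length_cons] at hlen; omega
      cases p with
      | nil => simp at hl
      | @cons d e b h' p' =>
        have : p'.length = 0 := by simpa using hl
        have hnil : e = b := by
          cases p' with
          | nil => rfl
          | cons _ _ => simp at this
        subst hnil
        cases p' with
        | nil =>
          refine ⟨d, a, h', h.symm, ?_, by simp, ?_⟩
          · intro hab; subst hab
            have := hp.support_nodup
            simp [Walk.support_cons] at this
          · exact h'.ne
        | cons h'' p'' => simp at this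

/-- In a caterpillar, every vertex with two distinct neighbors is on the witness spine. -/
lemma two_nbrs_mem_spine [DecidableEq V] (htree : T.IsTree) {qu qv : V} {Q : T.Walk qu qv}
    (hQ : Q.IsPath) (hdom : ∀ w : V, w ∈ Q.support ∨ ∃ z ∈ Q.support, T.Adj w z)
    {z y₁ y₂ : V} (h1 : T.Adj z y₁) (h2 : T.Adj z y₂) (hne : y₁ ≠ y₂) :
    z ∈ Q.support := by
  by_contra hz
  obtain ⟨z', hz'Q, hzz'⟩ := (hdom z).resolve_left hz
  obtain ⟨y, hy, hyz'⟩ : ∃ y, T.Adj z y ∧ y ≠ z' := by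
    by_cases h : y₁ = z'
    · exact ⟨y₂, h2, by rw [← h]; exact fun hh => hne hh.symm⟩
    · exact ⟨y₁, h1, h⟩
  have hz'z : T.Adj z' z := hzz'.symm
  by_cases hyQ : y ∈ Q.support
  · obtain ⟨q, hq, hqsub, _⟩ := path_between_in_support hQ hz'Q hyQ
    have hB : (Walk.cons hz'z (Walk.cons hy Walk.nil)).IsPath := by
      simp [Walk.cons_isPath_iff, hy.ne, hzz'.ne, hyz'.symm, hyz', hz'z.ne]
    have := (htree.existsUnique_path z' y).unique hq hB
    have hzq : z ∈ q.support := by rw [this]; simp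
    exact hz (hqsub hzq)
  · obtain ⟨y', hy'Q, hyy'⟩ := (hdom y).resolve_left hyQ
    by_cases hcase : y' = z'
    · subst hcase
      have hB : (Walk.cons hz'z (Walk.cons hy Walk.nil)).IsPath := by
        simp [Walk.cons_isPath_iff, hy.ne, hzz'.ne, hyz'.symm, hyz', hz'z.ne]
      have hA : (Walk.cons hyy'.symm Walk.nil).IsPath := singleton_isPath hyy'.symm
      have heq := (htree.existsUnique_path y' y).unique hB hA
      have hzq : z ∈ (Walk.cons hyy'.symm (Walk.nil : T.Walk y y)).support := by
        rw [← heq]; simp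
      simp only [Walk.support_cons, Walk.support_nil, List.mem_cons,
        List.not_mem_nil, or_false] at hzq
      rcases hzq with h | h
      · exact hz (h ▸ hz'Q)
      · exact hy.ne h
    · obtain ⟨q, hq, hqsub, _⟩ := path_between_in_support hQ hz'Q hy'Q
      have hzy' : z ≠ y' := fun h => hz (h ▸ hy'Q)
      have hB : (Walk.cons hz'z (Walk.cons hy (Walk.cons hyy' Walk.nil))).IsPath := by
        simp [Walk.cons_isPath_iff, hy.ne, hzz'.ne, hyz'.symm, hyy'.ne, hzy', hz'z.ne,
          Ne.symm hcase]
      have heq := (htree.existsUnique_path z' y').unique hq hB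
      have hzq : z ∈ q.support := by rw [heq]; simp
      exact hz (hqsub hzq)

lemma three_le_length_filter {α : Type*} [DecidableEq α] {l : List α} {p : α → Bool} {a b c : α}
    (ha : a ∈ l) (hb : b ∈ l) (hc : c ∈ l) (hab : a ≠ b) (hac : a ≠ c) (hbc : b ≠ c)
    (hpa : p a) (hpb : p b) (hpc : p c) :
    3 ≤ (l.filter p).length := by
  have h1 : [a, b, c].Nodup := by simp [hab, hac, hbc]
  have h2 : [a, b, c] ⊆ l.filter p := by
    intro x hx
    simp only [List.mem_cons, List.not_mem_nil, or_false] at hx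
    rcases hx with rfl | rfl | rfl <;> exact List.mem_filter.mpr ⟨by assumption, by assumption⟩
  simpa using (h1.subperm h2).length_le

lemma sym2_ne {xi a b : V} (hne : a ≠ b) (hax : a ≠ xi) : s(xi, a) ≠ s(xi, b) := by
  intro h
  rw [Sym2.eq_iff] at h
  rcases h with ⟨-, h⟩ | ⟨h1, h2⟩
  · exact hne h
  · exact hax h2

/-- appending a path starting at `xi` to `W₂`, where `W₂` touches `P` only at `xi`. -/
lemma append_isPath {w xi t : V} {W₂ : T.Walk w xi} (hW₂ : W₂.IsPath)
    {psupp : List V}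
    (hWsupp : ∀ x ∈ W₂.support, x ∈ psupp → x = xi)
    {B : T.Walk xi t} (hB : B.IsPath) (hBsub : B.support ⊆ psupp) :
    (W₂.append B).IsPath := by
  rw [Walk.isPath_def, Walk.support_append]
  apply (hW₂.support_nodup).append (hB.support_nodup.tail)
  intro x hx hx'
  have hxP : x ∈ psupp := hBsub (by rw [B.support_eq_cons]; exact List.mem_cons_of_mem _ hx')
  have : x = xi := hWsupp x hx hxP
  subst this
  have := hB.support_nodup
  rw [B.support_eq_cons] at this
  exact (List.nodup_cons.mp this).1 hx'

/-- ✦ : no vertex off the longest path `P` has two distinct neighbors. -/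
lemma no_branch [DecidableEq V] (htree : T.IsTree) {qu qv : V} {Q : T.Walk qu qv}
    (hQ : Q.IsPath) (hdom : ∀ w : V, w ∈ Q.support ∨ ∃ z ∈ Q.support, T.Adj w z)
    {u v : V} (P : T.Walk u v) (hP : P.IsPath)
    (hlongest : ∀ (a b : V) (R : T.Walk a b), R.IsPath → R.length ≤ P.length)
    {z : V} (hz : z ∉ P.support) {y₁ y₂ : V} (h1 : T.Adj z y₁) (h2 : T.Adj z y₂)
    (hne : y₁ ≠ y₂) : False := by
  obtain ⟨R, hR, -⟩ := htree.existsUnique_path z u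
  obtain ⟨xi, W₁, hxiP, hW₁, hsub, hfirst⟩ :=
    exists_first_hit (fun x => x ∈ P.support) R hR P.start_mem_support hz
  have hzxi : z ≠ xi := fun h => hz (h ▸ hxiP)
  have hW₁len : 1 ≤ W₁.length := by
    rcases Nat.eq_zero_or_pos W₁.length with h | h
    · exact absurd (Walk.eq_of_length_eq_zero h) hzxi
    · exact h
  -- find w adjacent to z outside W₁.support
  obtain ⟨w, hzw, hwW₁⟩ : ∃ w, T.Adj z w ∧ w ∉ W₁.support := by
    by_contra hcon
    push_neg at hcon
    have hm1 := hcon y₁ h1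
    have hm2 := hcon y₂ h2
    have he1 : s(z, y₁) ∈ W₁.edges :=
      adj_edge_mem_of_mem_support htree hW₁ W₁.start_mem_support hm1 h1
    have he2 : s(z, y₂) ∈ W₁.edges :=
      adj_edge_mem_of_mem_support htree hW₁ W₁.start_mem_support hm2 h2
    have hnedge : s(z, y₁) ≠ s(z, y₂) := sym2_ne hne h1.ne'
    have hle := filter_edges_start_le_one W₁ hW₁
    have hge : 2 ≤ (W₁.edges.filter (fun e => z ∈ e)).length :=
      two_le_length_filter he1 he2 hnedge (by simp) (by simp)
    omega
  -- w is off P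
  have hwP : w ∉ P.support := by
    intro hwP
    have hA : (Walk.cons hzw.symm W₁).IsPath := (Walk.cons_isPath_iff _ _).mpr ⟨hW₁, hwW₁⟩
    obtain ⟨q, hq, hqsub, -⟩ := path_between_in_support hP hwP hxiP
    have heq := (htree.existsUnique_path w xi).unique hq hA
    have : z ∈ q.support := by rw [heq]; simp [Walk.support_cons]
    exact hz (hqsub this)
  set W₂ : T.Walk w xi := Walk.cons hzw.symm W₁ with hW₂def
  have hW₂ : W₂.IsPath := (Walk.cons_isPath_iff _ _).mpr ⟨hW₁, hwW₁⟩
  have hW₂len : 2 ≤ W₂.length := by simp [hW₂def, Walk.length_cons]; omega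
  have hWsupp : ∀ x ∈ W₂.support, x ∈ P.support → x = xi := by
    intro x hx hxP
    rw [hW₂def, Walk.support_cons] at hx
    rcases List.mem_cons.mp hx with rfl | hx
    · exact absurd hxP hwP
    · exact hfirst x hx hxP
  -- split P at xi
  set A₁ : T.Walk u xi := P.takeUntil xi hxiP with hA₁def
  set A₂ : T.Walk xi v := P.dropUntil xi hxiP with hA₂def
  have hA₁ : A₁.IsPath := hP.takeUntil hxiP
  have hA₂ : A₂.IsPath := hP.dropUntil hxiP
  have hlensum : A₁.length + A₂.length = P.length := by
    have := congrArg Walk.length (Walk.take_spec P hxiP)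
    rwa [Walk.length_append] at this
  have hN₁ : (W₂.append A₂).IsPath :=
    append_isPath hW₂ hWsupp hA₂ (Walk.support_dropUntil_subset P hxiP)
  have hN₂ : (W₂.append A₁.reverse).IsPath := by
    refine append_isPath hW₂ hWsupp hA₁.reverse ?_
    rw [Walk.support_reverse]
    intro x hx
    exact Walk.support_takeUntil_subset P hxiP (List.mem_reverse.mp hx)
  have hb₁ : 2 ≤ A₁.length := by
    have := hlongest _ _ _ hN₁
    rw [Walk.length_append] at this
    omega
  have hb₂ : 2 ≤ A₂.length := by
    have := hlongest _ _ _ hN₂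
    rw [Walk.length_append, Walk.length_reverse] at this
    omega
  -- penultimate vertices
  obtain ⟨p₁, c₁, hp₁xi, hp₁c₁, hc₁xi, hp₁mem, hp₁ne⟩ := penultimate_facts A₁ hA₁ hb₁
  obtain ⟨p₂, c₂, hp₂xi, hp₂c₂, hc₂xi, hp₂mem', hp₂ne⟩ :=
    penultimate_facts A₂.reverse hA₂.reverse (by rwa [Walk.length_reverse])
  have hp₂mem : p₂ ∈ A₂.support := by
    rw [Walk.support_reverse, List.mem_reverse] at hp₂mem'; exact hp₂mem'
  obtain ⟨y, c, hyxi, hyc, hcxi, hymem, hyne⟩ := penultimate_facts W₂ hW₂ hW₂len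
  -- distinctness
  have hyP : y ∉ P.support := fun h => hyne (hWsupp y hymem h)
  have hy1 : y ≠ p₁ := fun h => hyP (h ▸ Walk.support_takeUntil_subset P hxiP hp₁mem)
  have hy2 : y ≠ p₂ := fun h => hyP (h ▸ Walk.support_dropUntil_subset P hxiP hp₂mem)
  have hp₁p₂ : p₁ ≠ p₂ := by
    intro h
    subst h
    have hPsupp : P.support = A₁.support ++ A₂.support.tail := by
      rw [← Walk.support_append, Walk.take_spec]
    have hnodup := hP.support_nodup
    rw [hPsupp] at hnodup
    have hdisj := List.nodup_append.mp hnodup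
    have hp₁tail : p₁ ∈ A₂.support.tail := by
      have := A₂.support_eq_cons
      rcases List.mem_cons.mp (this ▸ hp₂mem) with h | h
      · exact absurd h hp₂ne
      · exact h
    exact hdisj.2.2 p₁ hp₁mem p₁ hp₁tail rfl
  -- everything is on the witness spine Q
  have hyQ : y ∈ Q.support := two_nbrs_mem_spine htree hQ hdom hyxi hyc (Ne.symm hcxi)
  have hp₁Q : p₁ ∈ Q.support := two_nbrs_mem_spine htree hQ hdom hp₁xi hp₁c₁ (Ne.symm hc₁xi)
  have hp₂Q : p₂ ∈ Q.support := two_nbrs_mem_spine htree hQ hdom hp₂xi hp₂c₂ (Ne.symm hc₂xi)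
  have hxiQ : xi ∈ Q.support := two_nbrs_mem_spine htree hQ hdom hyxi.symm hp₁xi.symm hy1
  -- three distinct edges at xi on Q
  have he1 : s(xi, y) ∈ Q.edges := adj_edge_mem_of_mem_support htree hQ hxiQ hyQ hyxi.symm
  have he2 : s(xi, p₁) ∈ Q.edges := adj_edge_mem_of_mem_support htree hQ hxiQ hp₁Q hp₁xi.symm
  have he3 : s(xi, p₂) ∈ Q.edges := adj_edge_mem_of_mem_support htree hQ hxiQ hp₂Q hp₂xi.symm
  have hd1 : s(xi, y) ≠ s(xi, p₁) := sym2_ne hy1 hyne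
  have hd2 : s(xi, y) ≠ s(xi, p₂) := sym2_ne hy2 hyne
  have hd3 : s(xi, p₁) ≠ s(xi, p₂) := sym2_ne hp₁p₂ hp₁ne
  have hge : 3 ≤ (Q.edges.filter (fun e => xi ∈ e)).length :=
    three_le_length_filter he1 he2 he3 hd1 hd2 hd3 (by simp) (by simp) (by simp)
  have hle := filter_edges_le_two xi Q hQ
  omega

/-- Structure of off-path vertices: unique neighbor, interior on P. -/
lemma offP [DecidableEq V] (htree : T.IsTree) {qu qv : V} {Q : T.Walk qu qv}
    (hQ : Q.IsPath) (hdom : ∀ w : V, w ∈ Q.support ∨ ∃ z ∈ Q.support, T.Adj w z)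
    {u v : V} (P : T.Walk u v) (hP : P.IsPath)
    (hlongest : ∀ (a b : V) (R : T.Walk a b), R.IsPath → R.length ≤ P.length)
    {w : V} (hw : w ∉ P.support) :
    ∃ z, T.Adj w z ∧ (∀ y, T.Adj w y → y = z) ∧ z ∈ P.support ∧ z ≠ u ∧ z ≠ v := by
  have hwu : w ≠ u := fun h => hw (h ▸ P.start_mem_support)
  have hwv : w ≠ v := fun h => hw (h ▸ P.end_mem_support)
  obtain ⟨R, hR, -⟩ := htree.existsUnique_path w u
  have hRlen : 1 ≤ R.length := by
    rcases Nat.eq_zero_or_pos R.length with h | h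
    · exact absurd (Walk.eq_of_length_eq_zero h) hwu
    · exact h
  -- first neighbor
  obtain ⟨z, hwz, R', hRdef⟩ : ∃ (z : V) (hwz : T.Adj w z) (R' : T.Walk z u),
      R = Walk.cons hwz R' := by
    cases R with
    | nil => simp at hRlen
    | cons h R' => exact ⟨_, h, R', rfl⟩
  have huniq : ∀ y, T.Adj w y → y = z := by
    intro y hy
    by_contra hne
    exact no_branch htree hQ hdom P hP hlongest hw hy hwz hne
  refine ⟨z, hwz, huniq, ?_, ?_, ?_⟩
  · -- z ∈ P.support
    by_contra hzP
    subst hRdef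
    have hR' : R'.IsPath := hR.of_cons
    have hzu : z ≠ u := fun h => hzP (h ▸ P.start_mem_support)
    have hR'len : 1 ≤ R'.length := by
      rcases Nat.eq_zero_or_pos R'.length with h | h
      · exact absurd (Walk.eq_of_length_eq_zero h) hzu
      · exact h
    obtain ⟨c', hzc', R'', hR'def⟩ : ∃ (c' : V) (hzc' : T.Adj z c') (R'' : T.Walk c' u),
        R' = Walk.cons hzc' R'' := by
      cases R' with
      | nil => simp at hR'len
      | cons h R'' => exact ⟨_, h, R'', rfl⟩
    have hc'w : c' ≠ w := by
      intro h
      subst h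
      have := hR.support_nodup
      subst hR'def
      simp [Walk.support_cons] at this
    exact no_branch htree hQ hdom P hP hlongest hzP hzc' hwz.symm
      (fun h => hc'w h)
  · -- z ≠ u
    intro h
    subst h
    have hN : (Walk.cons hwz P).IsPath := (Walk.cons_isPath_iff _ _).mpr ⟨hP, hw⟩
    have := hlongest _ _ _ hN
    simp [Walk.length_cons] at this
  · -- z ≠ v
    intro h
    subst h
    have hwP' : w ∉ P.reverse.support := by rwa [Walk.support_reverse, List.mem_reverse]
    have hN : (Walk.cons hwz P.reverse).IsPath :=
      (Walk.cons_isPath_iff _ _).mpr ⟨hP.reverse, hwP'⟩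
    have := hlongest _ _ _ hN
    simp [Walk.length_cons, Walk.length_reverse] at this

lemma sq_adj_of_adj {a b : V} (h : T.Adj a b) : (GraphSquare T).Adj a b :=
  show a ≠ b ∧ (T.Adj a b ∨ ∃ w, T.Adj a w ∧ T.Adj w b) from ⟨h.ne, Or.inl h⟩

lemma sq_adj_common {a b c : V} (h1 : T.Adj a c) (h2 : T.Adj b c) (hne : a ≠ b) :
    (GraphSquare T).Adj a b :=
    show a ≠ b ∧ (T.Adj a b ∨ ∃ w, T.Adj a w ∧ T.Adj w b) from ⟨hne, Or.inr ⟨c, h1, h2.symm⟩⟩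

lemma chain'_of_all_adj {c : V} : ∀ {l : List V}, (∀ w ∈ l, T.Adj w c) → l.Nodup →
    List.Chain' (GraphSquare T).Adj l := by
  intro l
  induction l with
  | nil => intro _ _; exact List.IsChain.nil
  | cons a t ih =>
    intro hadj hnd
    cases t with
    | nil => exact List.isChain_singleton _
    | cons b t' =>
      refine List.IsChain.cons_cons ?_ (ih (fun w hw => hadj w (List.mem_cons_of_mem _ hw))
        (List.nodup_cons.mp hnd).2)
      exact sq_adj_common (hadj a (by simp)) (hadj b (by simp))
        (by have := (List.nodup_cons.mp hnd).1; intro h; exact this (h ▸ by simp))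

section Seq
variable (x : ℕ → V) (L : ℕ → List V) (m : ℕ)

def seqM : ℕ → List V
  | 0 => [x (m-2), x (m-1)]
  | (k+1) => x (m-3-k) :: (L (m-2-k) ++ (seqM k).reverse)

variable {x L m}

lemma seqM_spec (hm : 3 ≤ m)
    (hspine : ∀ i, i + 1 ≤ m - 1 → T.Adj (x i) (x (i+1)))
    (hinj : ∀ i i', i ≤ m-1 → i' ≤ m-1 → x i = x i' → i = i')
    (hlegadj : ∀ i, 1 ≤ i → i ≤ m-2 → ∀ w ∈ L i, T.Adj w (x i))
    (hlegoff : ∀ i, 1 ≤ i → i ≤ m-2 → ∀ w ∈ L i, ∀ i', i' ≤ m-1 → w ≠ x i')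
    (hlegdisj : ∀ i i', 1 ≤ i → i ≤ m-2 → 1 ≤ i' → i' ≤ m-2 →
      ∀ w, w ∈ L i → w ∈ L i' → i = i')
    (hlegnd : ∀ i, (L i).Nodup)
    (k : ℕ) (hk : k ≤ m - 3) :
    (seqM x L m k).head? = some (x (m-2-k)) ∧
    (seqM x L m k).getLast? = some (x (m-1-k)) ∧
    (∀ w, w ∈ seqM x L m k ↔
      (∃ i, m-2-k ≤ i ∧ i ≤ m-1 ∧ w = x i) ∨
      (∃ i, m-1-k ≤ i ∧ i ≤ m-2 ∧ w ∈ L i)) ∧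
    (seqM x L m k).Nodup ∧
    List.Chain' (GraphSquare T).Adj (seqM x L m k) ∧
    s(x (m-2), x (m-1)) ∈ pairs (seqM x L m k) ∧
    (∀ i, m-1-k ≤ i → i ≤ m-2 →
      s(x (i-1), (L i).headD (x (i+1))) ∈ pairs (seqM x L m k)) := by
  induction k with
  | zero =>
    have h1 : m-2+1 = m-1 := by omega
    refine ⟨rfl, rfl, ?_, ?_, ?_, ?_, ?_⟩
    · intro w
      constructor
      · intro hw
        rcases List.mem_cons.mp hw with h | h
        · exact Or.inl ⟨m-2, le_refl _, by omega, h⟩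
        · simp only [List.mem_singleton] at h
          exact Or.inl ⟨m-1, by omega, le_refl _, h⟩
      · rintro (⟨i, hi1, hi2, rfl⟩ | ⟨i, hi1, hi2, hw⟩)
        · have : i = m-2 ∨ i = m-1 := by omega
          rcases this with rfl | rfl <;> simp [seqM]
        · omega
    · simp only [seqM, List.nodup_cons, List.mem_singleton, List.not_mem_nil,
        not_false_iff, List.nodup_nil, and_true]
      intro h
      have := hinj _ _ (by omega) (by omega) h
      omega
    · simp only [seqM]
      refine List.isChain_cons_cons.mpr ⟨?_, List.isChain_singleton _⟩
      have := hspine (m-2) (by omega)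
      rw [h1] at this
      exact sq_adj_of_adj this
    · exact head_pair_mem _
    · intro i h1 h2; omega
  | succ k ih =>
    obtain ⟨ihh, ihl, ihmem, ihnd, ihch, ihe1, ihe2⟩ := ih (by omega)
    have hj1 : 2 ≤ m-2-k := by omega
    have hstep : seqM x L m (k+1) = x (m-2-k-1) :: (L (m-2-k) ++ (seqM x L m k).reverse) := by
      show x (m-3-k) :: (L (m-2-k) ++ (seqM x L m k).reverse) = _
      congr 2
      omega
    have hrevne : (seqM x L m k).reverse ≠ [] := by
      intro h
      have := congrArg List.head? h
      rw [List.head?_reverse, ihl] at this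
      simp at this
    have hrevhead : (seqM x L m k).reverse.head? = some (x (m-2-k+1)) := by
      rw [List.head?_reverse, ihl]; congr 2; omega
    have hheadapp : (L (m-2-k) ++ (seqM x L m k).reverse).head? =
        some ((L (m-2-k)).headD (x (m-2-k+1))) := by
      cases hLj : L (m-2-k) with
      | nil => simpa using hrevhead
      | cons a t => simp
    have hmemnew : ∀ w, w ∈ seqM x L m (k+1) ↔
        w = x (m-2-k-1) ∨ w ∈ L (m-2-k) ∨ w ∈ seqM x L m k := by
      intro w
      rw [hstep]
      simp [List.mem_cons, List.mem_append, List.mem_reverse]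
    refine ⟨?_, ?_, ?_, ?_, ?_, ?_, ?_⟩
    · have he : m - 2 - (k+1) = m-2-k-1 := by omega
      rw [hstep, List.head?_cons, he]
    · have he : m - 1 - (k+1) = m-2-k := by omega
      rw [hstep, he]
      have : (x (m-2-k-1) :: (L (m-2-k) ++ (seqM x L m k).reverse)) =
          [x (m-2-k-1)] ++ (L (m-2-k) ++ (seqM x L m k).reverse) := rfl
      rw [this, List.getLast?_append_of_ne_nil _ (by simp [hrevne]),
        List.getLast?_append_of_ne_nil _ hrevne, List.getLast?_reverse, ihh]
    · intro w
      rw [hmemnew w]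
      constructor
      · rintro (rfl | hw | hw)
        · exact Or.inl ⟨m-2-k-1, by omega, by omega, rfl⟩
        · exact Or.inr ⟨m-2-k, by omega, by omega, hw⟩
        · rcases (ihmem w).mp hw with ⟨i, h1, h2, h3⟩ | ⟨i, h1, h2, h3⟩
          · exact Or.inl ⟨i, by omega, h2, h3⟩
          · exact Or.inr ⟨i, by omega, h2, h3⟩
      · rintro (⟨i, h1, h2, rfl⟩ | ⟨i, h1, h2, hw⟩)
        · by_cases hi : i = m-2-k-1
          · exact Or.inl (by rw [hi])
          · exact Or.inr (Or.inr ((ihmem _).mpr (Or.inl ⟨i, by omega, h2, rfl⟩)))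
        · by_cases hi : i = m-2-k
          · exact Or.inr (Or.inl (hi ▸ hw))
          · exact Or.inr (Or.inr ((ihmem _).mpr (Or.inr ⟨i, by omega, h2, hw⟩)))
    · -- Nodup
      rw [hstep]
      refine List.nodup_cons.mpr ⟨?_, ?_⟩
      · rw [List.mem_append, List.mem_reverse]
        rintro (h | h)
        · exact hlegoff (m-2-k) (by omega) (by omega) _ h (m-2-k-1) (by omega) rfl
        · rcases (ihmem _).mp h with ⟨i, h1, h2, h3⟩ | ⟨i, h1, h2, h3⟩
          · have := hinj _ _ (by omega) (by omega) h3
            omega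
          · exact hlegoff i (by omega) h2 _ h3 (m-2-k-1) (by omega) rfl
      · refine List.Nodup.append (hlegnd _) (List.nodup_reverse.mpr ihnd) ?_
        intro w hw hw'
        rw [List.mem_reverse] at hw'
        rcases (ihmem _).mp hw' with ⟨i, h1, h2, h3⟩ | ⟨i, h1, h2, h3⟩
        · exact hlegoff (m-2-k) (by omega) (by omega) w hw i h2 h3
        · have := hlegdisj (m-2-k) i (by omega) (by omega) (by omega) h2 w hw h3
          omega
    · -- Chain'
      rw [hstep]
      have hchrev : List.Chain' (GraphSquare T).Adj (seqM x L m k).reverse := by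
        show List.IsChain _ _
        rw [List.isChain_reverse]
        exact List.IsChain.imp (fun a b h => (GraphSquare T).adj_symm h) ihch
      have hchL : List.Chain' (GraphSquare T).Adj (L (m-2-k)) :=
        chain'_of_all_adj (fun w hw => hlegadj _ (by omega) (by omega) w hw) (hlegnd _)
      have hmid : List.Chain' (GraphSquare T).Adj (L (m-2-k) ++ (seqM x L m k).reverse) := by
        show List.IsChain _ _
        rw [List.isChain_append]
        refine ⟨hchL, hchrev, ?_⟩
        intro a ha b hb
        rw [hrevhead] at hb
        simp only [Option.mem_def, Option.some.injEq] at hb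
        subst hb
        obtain ⟨hne', rfl⟩ := List.mem_getLast?_eq_getLast ha
        have haL : (L (m-2-k)).getLast hne' ∈ L (m-2-k) := List.getLast_mem hne'
        exact sq_adj_common (hlegadj _ (by omega) (by omega) _ haL)
          ((hspine (m-2-k) (by omega)).symm)
          (hlegoff _ (by omega) (by omega) _ haL _ (by omega))
      refine List.isChain_cons.mpr ⟨?_, hmid⟩
      intro b hb
      rw [hheadapp] at hb
      simp only [Option.mem_def, Option.some.injEq] at hb
      subst hb
      cases hLj : L (m-2-k) with
      | nil =>
        simp only [List.headD_nil]
        refine sq_adj_common (c := x (m-2-k)) ?_ ?_ ?_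
        · have := hspine (m-2-k-1) (by omega)
          have h2 : m-2-k-1+1 = m-2-k := by omega
          rwa [h2] at this
        · exact (hspine (m-2-k) (by omega)).symm
        · intro h
          have := hinj _ _ (by omega) (by omega) h
          omega
      | cons a t =>
        simp only [List.headD_cons]
        have haL : a ∈ L (m-2-k) := by rw [hLj]; simp
        refine sq_adj_common ?_ (hlegadj _ (by omega) (by omega) a haL) ?_
        · have := hspine (m-2-k-1) (by omega)
          have h2 : m-2-k-1+1 = m-2-k := by omega
          rwa [h2] at this
        · exact Ne.symm (hlegoff _ (by omega) (by omega) a haL (m-2-k-1) (by omega))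
    · -- old base edge still present
      rw [hstep]
      apply mem_pairs_append_right [x (m-2-k-1)]
      apply mem_pairs_append_right (L (m-2-k))
      rw [← List.mem_reverse] at ihe1
      rwa [← pairs_reverse] at ihe1
    · -- the marked edges
      intro i hi1 hi2
      by_cases hi : i = m-2-k
      · subst hi
        rw [hstep]
        cases hLj : L (m-2-k) with
        | nil =>
          obtain ⟨r, hr⟩ : ∃ r, (seqM x L m k).reverse = x (m-2-k+1) :: r := by
            cases hrev : (seqM x L m k).reverse with
            | nil => exact absurd hrev hrevne
            | cons a r =>
              rw [hrev] at hrevhead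
              simp only [List.head?_cons, Option.some.injEq] at hrevhead
              exact ⟨r, by rw [hrevhead]⟩
          rw [hr]
          simp only [List.nil_append, List.headD_nil]
          have hgoal : m-2-k-1+1 = m-2-k := by omega
          exact head_pair_mem r
        | cons a t =>
          simp only [List.cons_append, List.headD_cons]
          exact head_pair_mem _
      · rw [hstep]
        apply mem_pairs_append_right [x (m-2-k-1)]
        apply mem_pairs_append_right (L (m-2-k))
        have := ihe2 i (by omega) hi2
        rw [← List.mem_reverse, ← pairs_reverse] at this
        exact this


end Seq
end CatAux

/-- **Observation.** Let `T` be a caterpillar with at least three vertices and let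
`P = x₁x₂…x_m` be a longest path in `T`. Then `T²` has a hamiltonian cycle containing the
edges `x₁x₂` and `x_{m-1}x_m` and, for each `j = 2, …, m-1`, a further edge `u_j v_j` with
`u_j, v_j` neighbors of `x_j` in `T`, all these edges being pairwise distinct.
(Here the vertices of `P` are indexed from `0`, so `x_j = P.support.getD (j-1) u`.) -/
theorem caterpillar_square_hamiltonian_cycle [Fintype V] [DecidableEq V]
    (T : SimpleGraph V) (hT : IsCaterpillar T) (hV : 3 ≤ Fintype.card V)
    {u v : V} (P : T.Walk u v) (hP : P.IsPath)
    (hlongest : ∀ (a b : V) (Q : T.Walk a b), Q.IsPath → Q.length ≤ P.length) :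
    ∃ (a : V) (C : (GraphSquare T).Walk a a), C.IsHamiltonianCycle ∧
      s(P.support.getD 0 u, P.support.getD 1 u) ∈ C.edges ∧
      s(P.support.getD (P.support.length - 2) u,
        P.support.getD (P.support.length - 1) u) ∈ C.edges ∧
      ∃ e : ℕ → Sym2 V,
        (∀ j, 1 ≤ j → j ≤ P.support.length - 2 →
          e j ∈ C.edges ∧
          ∃ w₁ w₂, T.Adj (P.support.getD j u) w₁ ∧ T.Adj (P.support.getD j u) w₂ ∧
            e j = s(w₁, w₂)) ∧
        Set.InjOn e {j | 1 ≤ j ∧ j ≤ P.support.length - 2} ∧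
        (∀ j, 1 ≤ j → j ≤ P.support.length - 2 →
          e j ≠ s(P.support.getD 0 u, P.support.getD 1 u) ∧
          e j ≠ s(P.support.getD (P.support.length - 2) u,
                  P.support.getD (P.support.length - 1) u)) := by
  classical
  obtain ⟨htree, qu, qv, Q, hQ, hdom⟩ := hT
  set m := P.support.length with hmdef
  set x : ℕ → V := fun j => P.support.getD j u with hxdef
  have hgx : ∀ j, P.support.getD j u = x j := fun j => by rw [hxdef]
  simp only [hgx]
  set L : ℕ → List V := fun j =>
    (Finset.univ.filter (fun w => w ∉ P.support ∧ T.Adj w (x j))).toList with hLdef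
  have hLmem : ∀ j w, w ∈ L j ↔ (w ∉ P.support ∧ T.Adj w (x j)) := by
    intro j w
    rw [hLdef]
    simp [Finset.mem_filter]
  have hLnd : ∀ j, (L j).Nodup := fun j => by rw [hLdef]; exact Finset.nodup_toList _
  have hPnd : P.support.Nodup := hP.support_nodup
  have hm1 : m = P.length + 1 := by rw [hmdef, Walk.length_support]
  have hxmem : ∀ i, i < m → x i ∈ P.support := by
    intro i hi
    rw [hxdef]
    simp only
    rw [List.getD_eq_getElem P.support u (by omega)]
    exact List.getElem_mem _
  have hinj : ∀ i i', i ≤ m-1 → i' ≤ m-1 → x i = x i' → i = i' := by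
    intro i i' hi hi' he
    rw [hxdef] at he
    simp only at he
    rw [List.getD_eq_getElem P.support u (by omega),
      List.getD_eq_getElem P.support u (by omega)] at he
    exact hPnd.getElem_inj_iff.mp he
  have hchainT : List.Chain' T.Adj P.support := Walk.isChain_adj_support P
  have hspine : ∀ i, i + 1 ≤ m - 1 → T.Adj (x i) (x (i+1)) := by
    intro i hi
    rw [hxdef]
    simp only
    rw [List.getD_eq_getElem P.support u (by omega),
      List.getD_eq_getElem P.support u (by omega)]
    exact List.isChain_iff_getElem.mp hchainT i (by omega)
  have hx0 : x 0 = u := by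
    rw [hxdef]
    simp only
    conv_lhs => rw [P.support_eq_cons]
    rfl
  have hxlast : x (m-1) = v := by
    rw [hxdef]
    simp only
    rw [List.getD_eq_getElem P.support u (by omega)]
    have hgl := Walk.getLast_support P
    rw [List.getLast_eq_getElem] at hgl
    convert hgl using 2
  have hoffP : ∀ w, w ∉ P.support →
      ∃ z, T.Adj w z ∧ (∀ y, T.Adj w y → y = z) ∧ z ∈ P.support ∧ z ≠ u ∧ z ≠ v :=
    fun w hw => CatAux.offP htree hQ hdom P hP hlongest hw
  have hm3 : 3 ≤ m := by
    by_contra hcon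
    push_neg at hcon
    have hexw : ∃ w, w ∉ P.support := by
      by_contra hall
      push_neg at hall
      have h1 : (Finset.univ : Finset V).card ≤ P.support.toFinset.card :=
        Finset.card_le_card fun w _ => List.mem_toFinset.mpr (hall w)
      have h2 : P.support.toFinset.card ≤ P.support.length := P.support.toFinset_card_le
      rw [Finset.card_univ] at h1
      omega
    obtain ⟨w, hw⟩ := hexw
    obtain ⟨z, hadj, -, hzmem, hzu, hzv⟩ := hoffP w hw
    have huv : u ≠ v := by
      intro h
      subst h
      have hnil : P = Walk.nil := (Walk.isPath_iff_eq_nil (p := P)).mp hP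
      rw [hnil] at hzmem
      simp only [Walk.support_nil, List.mem_singleton] at hzmem
      exact hzu hzmem
    have hnd3 : [u, z, v].Nodup := by
      simp [huv, Ne.symm hzu, hzv]
    have hsub3 : [u, z, v] ⊆ P.support := by
      intro a ha
      simp only [List.mem_cons, List.not_mem_nil, or_false] at ha
      rcases ha with rfl | rfl | rfl
      · exact P.start_mem_support
      · exact hzmem
      · exact P.end_mem_support
    have := (hnd3.subperm hsub3).length_le
    simp only [List.length_cons, List.length_nil] at this
    omega
  have hlegadj : ∀ i, 1 ≤ i → i ≤ m-2 → ∀ w ∈ L i, T.Adj w (x i) :=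
    fun i _ _ w hw => ((hLmem i w).mp hw).2
  have hlegoff : ∀ i, 1 ≤ i → i ≤ m-2 → ∀ w ∈ L i, ∀ i', i' ≤ m-1 → w ≠ x i' := by
    intro i _ _ w hw i' hi' he
    exact ((hLmem i w).mp hw).1 (he ▸ hxmem i' (by omega))
  have hlegdisj : ∀ i i', 1 ≤ i → i ≤ m-2 → 1 ≤ i' → i' ≤ m-2 →
      ∀ w, w ∈ L i → w ∈ L i' → i = i' := by
    intro i i' h1 h2 h3 h4 w hw hw'
    obtain ⟨hw1, hw2⟩ := (hLmem i w).mp hw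
    obtain ⟨hw1', hw2'⟩ := (hLmem i' w).mp hw'
    obtain ⟨z, hadj, huniq, -, -, -⟩ := hoffP w hw1
    exact hinj i i' (by omega) (by omega) ((huniq _ hw2).trans (huniq _ hw2').symm)
  -- the main sequence
  obtain ⟨spech, specl, specmem, specnd, specch, spece1, spece2⟩ :=
    CatAux.seqM_spec (T := T) (x := x) (L := L) (m := m) hm3 hspine hinj hlegadj
      hlegoff hlegdisj hLnd (m-3) (le_refl _)
  rw [show m-2-(m-3) = 1 from by omega] at spech specmem
  rw [show m-1-(m-3) = 2 from by omega] at specl specmem spece2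
  set M1 := CatAux.seqM x L m (m-3) with hM1def
  obtain ⟨t1, hM1⟩ : ∃ t, M1 = x 1 :: t := by
    cases hc : M1 with
    | nil => rw [hc] at spech; simp at spech
    | cons a t =>
      rw [hc] at spech
      simp only [List.head?_cons, Option.some.injEq] at spech
      exact ⟨t, by rw [spech]⟩
  -- chain conditions
  have hchL1 : List.Chain' (GraphSquare T).Adj (L 1) :=
    CatAux.chain'_of_all_adj (fun w hw => hlegadj 1 (le_refl _) (by omega) w hw) (hLnd 1)
  have hadjux1 : T.Adj u (x 1) := by
    have := hspine 0 (by omega)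
    rwa [hx0] at this
  have hchL1u : List.Chain' (GraphSquare T).Adj (L 1 ++ [u]) := by
    show List.IsChain _ _
    rw [List.isChain_append]
    refine ⟨hchL1, List.isChain_singleton _, ?_⟩
    intro a ha b hb
    simp only [List.head?_cons, Option.mem_def, Option.some.injEq] at hb
    subst hb
    obtain ⟨hne', rfl⟩ := List.mem_getLast?_eq_getLast ha
    have haL : (L 1).getLast hne' ∈ L 1 := List.getLast_mem hne'
    refine CatAux.sq_adj_common (hlegadj 1 (le_refl _) (by omega) _ haL) hadjux1 ?_
    have := hlegoff 1 (le_refl _) (by omega) _ haL 0 (by omega)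
    rwa [hx0] at this
  have hchfull : List.Chain' (GraphSquare T).Adj (M1 ++ (L 1 ++ [u])) := by
    show List.IsChain _ _
    rw [List.isChain_append]
    refine ⟨specch, hchL1u, ?_⟩
    intro a ha b hb
    rw [specl] at ha
    simp only [Option.mem_def, Option.some.injEq] at ha
    subst ha
    have hadj21 : T.Adj (x 2) (x 1) := (hspine 1 (by omega)).symm
    cases hL1 : L 1 with
    | nil =>
      rw [hL1] at hb
      simp only [List.nil_append, List.head?_cons, Option.mem_def, Option.some.injEq] at hb
      subst hb
      refine CatAux.sq_adj_common hadj21 hadjux1 ?_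
      intro h
      rw [← hx0] at h
      have := hinj 2 0 (by omega) (by omega) h
      omega
    | cons a0 t0 =>
      rw [hL1] at hb
      simp only [List.cons_append, List.head?_cons, Option.mem_def, Option.some.injEq] at hb
      subst hb
      have ha0 : a0 ∈ L 1 := by rw [hL1]; simp
      refine CatAux.sq_adj_common hadj21 (hlegadj 1 (le_refl _) (by omega) _ ha0) ?_
      exact Ne.symm (hlegoff 1 (le_refl _) (by omega) _ ha0 2 (by omega))
  have hch : List.Chain (GraphSquare T).Adj (x 1) ((t1 ++ L 1) ++ [u]) := by
    have h2 : List.Chain' (GraphSquare T).Adj ((x 1 :: t1) ++ (L 1 ++ [u])) := by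
      rw [← hM1]; exact hchfull
    rw [List.cons_append] at h2
    rw [List.append_assoc]
    exact h2
  have h01 : (GraphSquare T).Adj u (x 1) := CatAux.sq_adj_of_adj hadjux1
  set Pw := CatAux.mkWalk (GraphSquare T) (x 1) u (t1 ++ L 1) hch with hPwdef
  have hsupp2 : Pw.support = (M1 ++ L 1) ++ [u] := by
    rw [hPwdef, CatAux.mkWalk_support, hM1]
    simp
  have hedges2 : Pw.edges = CatAux.pairs ((M1 ++ L 1) ++ [u]) := by
    rw [hPwdef, CatAux.mkWalk_edges, hM1]
    simp
  have hndPw : Pw.support.Nodup := by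
    rw [hsupp2]
    refine List.Nodup.append ?_ (by simp) ?_
    · refine List.Nodup.append specnd (hLnd 1) ?_
      intro a haM haL
      rcases (specmem a).mp haM with ⟨i, hi1, hi2, rfl⟩ | ⟨i, hi1, hi2, hLa⟩
      · exact ((hLmem 1 _).mp haL).1 (hxmem i (by omega))
      · have := hlegdisj i 1 (by omega) hi2 (by omega) (by omega) a hLa haL
        omega
    · intro a ha hau
      simp only [List.mem_singleton] at hau
      subst hau
      rcases List.mem_append.mp ha with haM | haL
      · rcases (specmem a).mp haM with ⟨i, hi1, hi2, he⟩ | ⟨i, hi1, hi2, hLa⟩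
        · rw [← hx0] at he
          have := hinj 0 i (by omega) (by omega) he
          omega
        · exact ((hLmem i a).mp hLa).1 P.start_mem_support
      · exact ((hLmem 1 a).mp haL).1 P.start_mem_support
  have hPwpath : Pw.IsPath := (Walk.isPath_def _).mpr hndPw
  -- the closing edge is not on Pw
  obtain ⟨wstar, hwstarlast, hwstarmem⟩ :
      ∃ w, (M1 ++ L 1).getLast? = some w ∧ (w = x 2 ∨ w ∈ L 1) := by
    by_cases hL1 : L 1 = []
    · refine ⟨x 2, ?_, Or.inl rfl⟩
      rw [hL1]
      simpa using specl
    · refine ⟨(L 1).getLast hL1, ?_, Or.inr (List.getLast_mem hL1)⟩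
      rw [List.getLast?_append_of_ne_nil _ hL1, List.getLast?_eq_getLast hL1]
  have hlastedge : s(wstar, u) ∈ Pw.edges := by
    rw [hedges2]
    exact CatAux.pairs_junction hwstarlast (by simp)
  have hwstarne : x 1 ≠ wstar := by
    rcases hwstarmem with rfl | hmem
    · intro h
      have := hinj 1 2 (by omega) (by omega) h
      omega
    · intro h
      exact ((hLmem 1 wstar).mp hmem).1 (h ▸ hxmem 1 (by omega))
  have hclose : s(u, x 1) ∉ Pw.edges := by
    intro hmem
    have hone := CatAux.filter_edges_start_le_one (Pw.reverse) hPwpath.reverse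
    rw [Walk.edges_reverse, List.filter_reverse, List.length_reverse] at hone
    have hne2 : s(u, x 1) ≠ s(wstar, u) := by
      intro h
      rw [Sym2.eq_iff] at h
      rcases h with ⟨h1, h2⟩ | ⟨h1, h2⟩
      · rw [← hx0] at h2
        have := hinj 1 0 (by omega) (by omega) h2
        omega
      · exact hwstarne h2
    have h2le : 2 ≤ (Pw.edges.filter (fun e => u ∈ e)).length :=
      CatAux.two_le_length_filter hmem hlastedge hne2 (by simp) (by simp)
    omega
  set C : (GraphSquare T).Walk u u := Walk.cons h01 Pw with hCdef
  have hCE : C.edges = s(u, x 1) :: Pw.edges := by rw [hCdef, Walk.edges_cons]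
  have hcycle : C.IsCycle := (Walk.cons_isCycle_iff Pw h01).mpr ⟨hPwpath, hclose⟩
  have hsuppall : ∀ a : V, a ∈ Pw.support := by
    intro a
    rw [hsupp2]
    rw [List.append_assoc, List.mem_append]
    by_cases haP : a ∈ P.support
    · have hidx : P.support.idxOf a < P.support.length := List.idxOf_lt_length_iff.mpr haP
      have hxi : x (P.support.idxOf a) = a := by
        rw [hxdef]
        simp only
        rw [List.getD_eq_getElem P.support u (by omega)]
        exact List.getElem_idxOf hidx
      by_cases hi0 : P.support.idxOf a = 0
      · rw [hi0] at hxi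
        rw [hx0] at hxi
        right
        rw [List.mem_append]
        right
        simp [hxi]
      · left
        exact (specmem a).mpr (Or.inl ⟨P.support.idxOf a, by omega, by omega, hxi.symm⟩)
    · obtain ⟨z, hadj, huniq, hzmem, hzu, hzv⟩ := hoffP a haP
      have hidx : P.support.idxOf z < P.support.length := List.idxOf_lt_length_iff.mpr hzmem
      have hxi : x (P.support.idxOf z) = z := by
        rw [hxdef]
        simp only
        rw [List.getD_eq_getElem P.support u (by omega)]
        exact List.getElem_idxOf hidx
      have hi0 : P.support.idxOf z ≠ 0 := fun h => hzu (by rw [← hxi, h, hx0])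
      have him : P.support.idxOf z ≠ m-1 := fun h => hzv (by rw [← hxi, h, hxlast])
      have haLi : a ∈ L (P.support.idxOf z) :=
        (hLmem _ a).mpr ⟨haP, by rw [hxi]; exact hadj⟩
      by_cases hi1 : P.support.idxOf z = 1
      · right
        rw [List.mem_append]
        left
        rw [← hi1]
        exact haLi
      · left
        exact (specmem a).mpr (Or.inr ⟨P.support.idxOf z, by omega, by omega, haLi⟩)
  have hham : C.IsHamiltonianCycle := by
    rw [Walk.isHamiltonianCycle_iff_isCycle_and_support_count_tail_eq_one]
    refine ⟨hcycle, ?_⟩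
    intro a
    have htl : C.support.tail = Pw.support := by
      rw [hCdef, Walk.support_cons, List.tail_cons]
    rw [htl]
    exact List.count_eq_one_of_mem hndPw (hsuppall a)
  refine ⟨u, C, hham, ?_, ?_, ?_⟩
  · rw [hCE, hx0]
    exact List.mem_cons_self
  · rw [hCE]
    refine List.mem_cons_of_mem _ ?_
    rw [hedges2]
    exact CatAux.mem_pairs_append_left _ (CatAux.mem_pairs_append_left _ spece1)
  · set e : ℕ → Sym2 V := fun j =>
      if j = 1 then s(x 2, (L 1).headD (x 0)) else s(x (j-1), (L j).headD (x (j+1)))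
      with hedef
    have hdesc : ∀ j, 1 ≤ j → j ≤ m-2 → ∃ b,
        e j = s(x (if j = 1 then 2 else j-1), b) ∧
        (b ∈ L j ∨ b = x (if j = 1 then 0 else j+1)) := by
      intro j hj1 hj2
      by_cases hj : j = 1
      · subst hj
        refine ⟨(L 1).headD (x 0), by simp [hedef], ?_⟩
        simpa using (CatAux.headD_mem_or (l := L 1) (d := x 0))
      · refine ⟨(L j).headD (x (j+1)), by simp [hedef, hj], ?_⟩
        simpa [hj] using (CatAux.headD_mem_or (l := L j) (d := x (j+1)))
    refine ⟨e, ?_, ?_, ?_⟩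
    · -- membership and neighbor structure
      intro j hj1 hj2
      constructor
      · -- e j ∈ C.edges
        rw [hCE]
        refine List.mem_cons_of_mem _ ?_
        rw [hedges2]
        by_cases hj : j = 1
        · subst hj
          simp only [hedef, if_pos rfl]
          rw [List.append_assoc]
          cases hL1 : L 1 with
          | nil =>
            simp only [List.headD_nil, hx0]
            simpa using CatAux.pairs_junction specl (l₂ := [u]) (by simp)
          | cons a0 t0 =>
            simp only [List.headD_cons]
            simpa using CatAux.pairs_junction specl (l₂ := (a0 :: t0) ++ [u]) (by simp)
        · have hee : e j = s(x (j-1), (L j).headD (x (j+1))) := by simp [hedef, hj]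
          rw [hee]
          refine CatAux.mem_pairs_append_left _ (CatAux.mem_pairs_append_left _ ?_)
          exact spece2 j (by omega) hj2
      · -- neighbors of x j
        by_cases hj : j = 1
        · subst hj
          refine ⟨x 2, (L 1).headD (x 0), (hspine 1 (by omega)), ?_, by simp [hedef]⟩
          rcases CatAux.headD_mem_or (l := L 1) (d := x 0) with hmem | heq
          · exact (hlegadj 1 (le_refl _) (by omega) _ hmem).symm
          · rw [heq, hx0]
            exact hadjux1.symm
        · have hee : e j = s(x (j-1), (L j).headD (x (j+1))) := by simp [hedef, hj]
          refine ⟨x (j-1), (L j).headD (x (j+1)), ?_, ?_, hee⟩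
          · have := hspine (j-1) (by omega)
            rw [show j-1+1 = j from by omega] at this
            exact this.symm
          · rcases CatAux.headD_mem_or (l := L j) (d := x (j+1)) with hmem | heq
            · exact (hlegadj j (by omega) hj2 _ hmem).symm
            · rw [heq]
              exact hspine j (by omega)
    · -- injectivity
      intro j hj j' hj' he
      simp only [Set.mem_setOf_eq] at hj hj'
      obtain ⟨hj1, hj2⟩ := hj
      obtain ⟨hj1', hj2'⟩ := hj'
      obtain ⟨b, heb, hbmem⟩ := hdesc j hj1 hj2
      obtain ⟨b', heb', hbmem'⟩ := hdesc j' hj1' hj2'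
      rw [heb, heb'] at he
      rw [Sym2.eq_iff] at he
      have hα : (if j = 1 then 2 else j-1) ≤ m-1 := by split <;> omega
      have hα' : (if j' = 1 then 2 else j'-1) ≤ m-1 := by split <;> omega
      have hβ : (if j = 1 then 0 else j+1) ≤ m-1 := by split <;> omega
      have hβ' : (if j' = 1 then 0 else j'+1) ≤ m-1 := by split <;> omega
      rcases he with ⟨h1, h2⟩ | ⟨h1, h2⟩
      · -- aligned
        rcases hbmem with hbL | hbx
        · rcases hbmem' with hbL' | hbx'
          · exact hlegdisj j j' hj1 hj2 hj1' hj2' b hbL (h2 ▸ hbL')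
          · exfalso
            exact hlegoff j hj1 hj2 b hbL _ hβ' (h2.trans hbx')
        · rcases hbmem' with hbL' | hbx'
          · exfalso
            exact hlegoff j' hj1' hj2' b' hbL' _ hβ (h2 ▸ hbx)
          · have e1 := hinj _ _ hα hα' h1
            have e2 := hinj _ _ hβ hβ' (by rw [← hbx, h2, hbx'])
            by_cases hc1 : j = 1 <;> by_cases hc2 : j' = 1 <;>
              simp [hc1, hc2] at e1 e2 <;> omega
      · -- crossed
        rcases hbmem' with hbL' | hbx'
        · exact absurd h1 (Ne.symm (hlegoff j' hj1' hj2' b' hbL' _ hα))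
        · rcases hbmem with hbL | hbx
          · exact absurd h2 (hlegoff j hj1 hj2 b hbL _ hα')
          · have e1 := hinj _ _ hα hβ' (by rw [h1, hbx'])
            have e2 := hinj _ _ hβ hα' (by rw [← hbx, h2])
            by_cases hc1 : j = 1 <;> by_cases hc2 : j' = 1 <;>
              simp [hc1, hc2] at e1 e2 <;> omega
    · -- distinct from the end edges
      intro j hj1 hj2
      obtain ⟨b, heb, hbmem⟩ := hdesc j hj1 hj2
      have hα : (if j = 1 then 2 else j-1) ≤ m-1 := by split <;> omega
      have hβ : (if j = 1 then 0 else j+1) ≤ m-1 := by split <;> omega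
      constructor
      · rw [heb]
        intro h
        rw [Sym2.eq_iff] at h
        rcases h with ⟨h1, h2⟩ | ⟨h1, h2⟩
        · have := hinj _ _ hα (by omega) h1
          by_cases hc : j = 1 <;> simp [hc] at this <;> omega
        · rcases hbmem with hbL | hbx
          · exact hlegoff j hj1 hj2 b hbL 0 (by omega) h2
          · have e2 := hinj _ _ hβ (by omega) (hbx ▸ h2)
            have e1 := hinj _ _ hα (by omega) h1
            by_cases hc : j = 1 <;> simp [hc] at e1 e2 <;> omega
      · rw [heb]
        intro h
        rw [Sym2.eq_iff] at h
        rcases h with ⟨h1, h2⟩ | ⟨h1, h2⟩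
        · rcases hbmem with hbL | hbx
          · exact hlegoff j hj1 hj2 b hbL (m-1) (by omega) h2
          · have e2 := hinj _ _ hβ (by omega) (hbx ▸ h2)
            have e1 := hinj _ _ hα (by omega) h1
            by_cases hc : j = 1 <;> simp [hc] at e1 e2 <;> omega
        · rcases hbmem with hbL | hbx
          · exact hlegoff j hj1 hj2 b hbL (m-2) (by omega) h2
          · have e2 := hinj _ _ hβ (by omega) (hbx ▸ h2)
            have e1 := hinj _ _ hα (by omega) h1
            by_cases hc : j = 1 <;> simp [hc] at e1 e2 <;> omega
end

section
/- Let k ≥ 5 and let G be a connected graph containing the complete bipartite graph K_{2,k} as a block, such that each of the k vertices of degree 2 in this K_{2,k} is a cutvertex of G incident with an edge of G outside the block. Then the square G² is not hamiltonian. -/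
open SimpleGraph Function

variable {V : Type*}

section AuxiliaryLemmas

/-- From a `G`-walk whose support lies in `S`, get reachability in `G.induce S`. -/
lemma aux_reachable_induce_of_walk {G : SimpleGraph V} {S : Set V} {x y : V} (p : G.Walk x y)
    (hp : ∀ z ∈ p.support, z ∈ S) (hx : x ∈ S) (hy : y ∈ S) :
    (G.induce S).Reachable ⟨x, hx⟩ ⟨y, hy⟩ := by
  have hconn := p.connected_induce_support
  have hr : (G.induce {v | v ∈ p.support}).Reachable ⟨x, p.start_mem_support⟩
      ⟨y, p.end_mem_support⟩ := hconn.preconnected _ _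
  have := hr.map (induceHomOfLE G (fun z hz => hp z hz)).toHom
  exact this

/-- From reachability in `G.induce S`, get a `G`-walk whose support lies in `S`. -/
lemma aux_walk_of_reachable_induce {G : SimpleGraph V} {S : Set V} {x y : V}
    (hx : x ∈ S) (hy : y ∈ S) (h : (G.induce S).Reachable ⟨x, hx⟩ ⟨y, hy⟩) :
    ∃ p : G.Walk x y, ∀ z ∈ p.support, z ∈ S := by
  obtain ⟨w⟩ := h
  refine ⟨w.map (SimpleGraph.Embedding.induce S).toHom, ?_⟩
  intro z hz
  have hz : z ∈ (w.map (SimpleGraph.Embedding.induce S).toHom).support := hz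
  rw [Walk.support_map, List.mem_map] at hz
  obtain ⟨⟨z', hz'⟩, _, rfl⟩ := hz
  exact hz'

/-- First vertex of a walk belonging to a set `T` that the walk meets. -/
lemma aux_first_in_set {G : SimpleGraph V} {T : Set V} :
    ∀ {x z : V} (p : G.Walk x z), (∃ u ∈ p.support, u ∈ T) →
      ∃ y ∈ T, ∃ q : G.Walk x y, (∀ u ∈ q.support, u ∈ T → u = y) ∧
        (∀ u ∈ q.support, u ∈ p.support) := by
  intro x z p
  induction p with
  | nil =>
    rintro ⟨u, hu, huT⟩
    simp only [Walk.support_nil, List.mem_singleton] at hu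
    subst hu
    exact ⟨u, huT, Walk.nil, by simp, by simp⟩
  | @cons a b c hab p ih =>
    rintro ⟨u, hu, huT⟩
    by_cases haT : a ∈ T
    · exact ⟨a, haT, Walk.nil, by simp, by simp⟩
    · have hu' : u ∈ p.support := by
        rcases List.mem_cons.mp (by simpa using hu) with rfl | h
        · exact absurd huT haT
        · exact h
      obtain ⟨y, hyT, q, hq1, hq2⟩ := ih ⟨u, hu', huT⟩
      refine ⟨y, hyT, Walk.cons hab q, ?_, ?_⟩
      · intro s hs hsT
        rcases List.mem_cons.mp (by simpa using hs) with rfl | h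
        · exact absurd hsT haT
        · exact hq1 s h hsT
      · intro s hs
        rcases List.mem_cons.mp (by simpa using hs) with rfl | h
        · simp
        · simp [hq2 s h]

/-- Along a path, from any vertex one can reach one of the two endpoints avoiding a vertex `z`
distinct from the starting vertex. -/
lemma aux_escape_path {G : SimpleGraph V} {x y z u : V} (E : G.Walk x y) (hE : E.IsPath)
    (hu : u ∈ E.support) (hz : z ≠ u) :
    ∃ e, (e = x ∨ e = y) ∧ e ≠ z ∧ ∃ w : G.Walk u e,
      (∀ s ∈ w.support, s ∈ E.support) ∧ z ∉ w.support := by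
  classical
  by_cases hzt : z ∈ (E.takeUntil u hu).support
  · have hnd : E.support.Nodup := hE.support_nodup
    have hsup : E.support = (E.takeUntil u hu).support ++ (E.dropUntil u hu).support.tail := by
      rw [← Walk.support_append, Walk.take_spec]
    have hdisj : (E.takeUntil u hu).support.Disjoint (E.dropUntil u hu).support.tail := by
      rw [hsup] at hnd; exact List.disjoint_of_nodup_append hnd
    have hzd : z ∉ (E.dropUntil u hu).support := by
      intro hzd
      have htl : z ∈ (E.dropUntil u hu).support.tail := by
        have hcons := Walk.support_eq_cons (E.dropUntil u hu)
        rw [hcons] at hzd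
        rcases List.mem_cons.mp hzd with rfl | h
        · exact (hz rfl).elim
        · exact h
      exact hdisj hzt htl
    refine ⟨y, Or.inr rfl, ?_, E.dropUntil u hu,
      fun s hs => E.support_dropUntil_subset hu hs, hzd⟩
    rintro rfl
    exact hzd (E.dropUntil u hu).end_mem_support
  · refine ⟨x, Or.inl rfl, ?_, (E.takeUntil u hu).reverse, ?_, ?_⟩
    · rintro rfl
      exact hzt (E.takeUntil u hu).start_mem_support
    · intro s hs
      rw [Walk.support_reverse, List.mem_reverse] at hs
      exact E.support_takeUntil_subset hu hs
    · rw [Walk.support_reverse, List.mem_reverse]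
      exact hzt


lemma aux_count_one_inj {α β : Type*} [DecidableEq β] {l : List α} (hnd : l.Nodup) (f : α → β)
    {x y : α} (hx : x ∈ l) (hy : y ∈ l) (hf : f x = f y)
    (hc : (l.map f).count (f x) ≤ 1) : x = y := by
  classical
  by_contra hxy
  set l' := l.filter (fun a => f a = f x) with hl'
  have hx' : x ∈ l' := List.mem_filter.mpr ⟨hx, by simp⟩
  have hy' : y ∈ l' := List.mem_filter.mpr ⟨hy, by simp [hf]⟩
  have hnd' : l'.Nodup := hnd.filter _
  have h2 : 2 ≤ l'.length := by
    have hsub : ({x, y} : Finset α) ⊆ l'.toFinset := by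
      intro s hs
      rcases Finset.mem_insert.mp hs with rfl | hs
      · simpa using hx'
      · simpa using (Finset.mem_singleton.mp hs ▸ hy')
    calc 2 = ({x, y} : Finset α).card := by rw [Finset.card_insert_of_notMem (by simpa using hxy), Finset.card_singleton]
    _ ≤ l'.toFinset.card := Finset.card_le_card hsub
    _ ≤ l'.length := l'.toFinset_card_le
  have hcount : (l.map f).count (f x) = l'.length := by
    rw [List.count_eq_countP, List.countP_map, hl', List.countP_eq_length_filter]
    congr 1
  omega

lemma aux_darts_nodup [DecidableEq V] {G : SimpleGraph V} {a0 : V} {c : G.Walk a0 a0}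
    (hc : c.IsHamiltonianCycle) : c.darts.Nodup := by
  have h : (c.darts.map SimpleGraph.Dart.edge).Nodup := hc.isCycle.isTrail.edges_nodup
  exact h.of_map _

lemma aux_count_snd [DecidableEq V] {G : SimpleGraph V} {a0 : V} {c : G.Walk a0 a0}
    (hc : c.IsHamiltonianCycle) (v : V) :
    (c.darts.map (·.snd)).count v = 1 := by
  rw [Walk.map_snd_darts, ← Walk.support_tail_of_not_nil c hc.isCycle.not_nil]
  exact hc.isHamiltonian_tail v

lemma aux_count_fst [DecidableEq V] {G : SimpleGraph V} {a0 : V} {c : G.Walk a0 a0}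
    (hc : c.IsHamiltonianCycle) (v : V) :
    (c.darts.map (·.fst)).count v = 1 := by
  rw [Walk.map_fst_darts]
  have hne : c.support ≠ [] := c.support_ne_nil
  have hsplit : c.support = c.support.dropLast ++ [a0] := by
    conv_lhs => rw [← List.dropLast_append_getLast hne]
    rw [c.getLast_support]
  have h1 : c.support.count v = c.support.dropLast.count v + List.count v [a0] := by
    conv_lhs => rw [hsplit]
    rw [List.count_append]
  have h2 : c.support.count v = c.support.tail.count v + List.count v [a0] := by
    conv_lhs => rw [Walk.support_eq_cons c]
    rw [List.count_cons]
    by_cases h : v = a0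
    · subst h; simp
    · simp [h, Ne.symm h]
  have h3 : c.support.tail.count v = 1 := by
    rw [← Walk.support_tail_of_not_nil c hc.isCycle.not_nil]
    exact hc.isHamiltonian_tail v
  omega

lemma aux_dart_eq_of_fst [DecidableEq V] {G : SimpleGraph V} {a0 : V} {c : G.Walk a0 a0}
    (hc : c.IsHamiltonianCycle) {d1 d2 : G.Dart} (h1 : d1 ∈ c.darts) (h2 : d2 ∈ c.darts)
    (h : d1.fst = d2.fst) : d1 = d2 :=
  aux_count_one_inj (aux_darts_nodup hc) (·.fst) h1 h2 h
    (le_of_eq (aux_count_fst hc _))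

lemma aux_dart_eq_of_snd [DecidableEq V] {G : SimpleGraph V} {a0 : V} {c : G.Walk a0 a0}
    (hc : c.IsHamiltonianCycle) {d1 d2 : G.Dart} (h1 : d1 ∈ c.darts) (h2 : d2 ∈ c.darts)
    (h : d1.snd = d2.snd) : d1 = d2 :=
  aux_count_one_inj (aux_darts_nodup hc) (·.snd) h1 h2 h
    (le_of_eq (aux_count_snd hc _))

lemma aux_cross [DecidableEq V] {G : SimpleGraph V} {a0 : V} {c : G.Walk a0 a0}
    (hc : c.IsHamiltonianCycle) (S : Set V) {s t : V} (hs : s ∈ S) (ht : t ∉ S) :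
    (∃ d ∈ c.darts, d.fst ∈ S ∧ d.snd ∉ S) ∧ (∃ d ∈ c.darts, d.fst ∉ S ∧ d.snd ∈ S) := by
  classical
  have hsmem : s ∈ c.support := hc.mem_support s
  set r := c.rotate s hsmem with hr
  have hdperm : r.darts ~r c.darts := c.rotate_darts s hsmem
  have htmem : t ∈ r.support := by
    have h1 : t ∈ c.support.tail := by
      rw [← Walk.support_tail_of_not_nil c hc.isCycle.not_nil]
      exact (hc.isHamiltonian_tail).mem_support t
    have h2 := c.support_rotate s hsmem
    have : t ∈ r.support.tail := h2.mem_iff.mpr h1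
    exact List.mem_of_mem_tail this
  constructor
  · obtain ⟨d, hd, hd1, hd2⟩ := (r.takeUntil t htmem).exists_boundary_dart S hs ht
    exact ⟨d, hdperm.perm.mem_iff.mp (r.darts_takeUntil_subset htmem hd), hd1, hd2⟩
  · obtain ⟨d, hd, hd1, hd2⟩ := (r.dropUntil t htmem).exists_boundary_dart Sᶜ ht (by simpa using hs)
    refine ⟨d, hdperm.perm.mem_iff.mp (r.darts_dropUntil_subset htmem hd), by simpa using hd1,
      by simpa using hd2⟩

end AuxiliaryLemmas

/-- Let `k ≥ 5` and let `G` be a connected graph containing `K_{2,k}` as a block such that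
each of the `k` vertices of degree 2 of this `K_{2,k}` is a cutvertex of `G` incident with
an edge of `G` outside the block. Then `G²` is not hamiltonian. -/
theorem square_not_hamiltonian_of_K2k_block [Fintype V]
    (G : SimpleGraph V) (hG : G.Connected)
    (k : ℕ) (hk : 5 ≤ k) (B : Set V) (hB : IsBlock G B)
    (φ : G.induce B ≃g completeBipartiteGraph (Fin 2) (Fin k))
    (hcut : ∀ j : Fin k,
      IsCutVertex G ((φ.symm (Sum.inr j) : B) : V) ∧
      ∃ w : V, w ∉ B ∧ G.Adj ((φ.symm (Sum.inr j) : B) : V) w) :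
    ¬ HasHamiltonianCycle (GraphSquare G) := by
  classical
  rintro ⟨a0, c, hc⟩
  -- distinguished vertices of the K_{2,k} block
  set va : V := ((φ.symm (Sum.inl 0) : B) : V) with hva_def
  set vb : V := ((φ.symm (Sum.inl 1) : B) : V) with hvb_def
  set vc : Fin k → V := fun j => ((φ.symm (Sum.inr j) : B) : V) with hvc_def
  have hvaB : va ∈ B := Subtype.coe_prop _
  have hvbB : vb ∈ B := Subtype.coe_prop _
  have hvcB : ∀ j, vc j ∈ B := fun j => Subtype.coe_prop _
  have hBinj : ∀ s t : Fin 2 ⊕ Fin k, ((φ.symm s : B) : V) = ((φ.symm t : B) : V) → s = t := by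
    intro s t h
    exact φ.symm.injective (Subtype.ext h)
  have hvab : va ≠ vb := by
    intro h; have := hBinj _ _ h; simp at this
  have hvac : ∀ j, va ≠ vc j := by
    intro j h; have := hBinj _ _ h; simp at this
  have hvbc : ∀ j, vb ≠ vc j := by
    intro j h; have := hBinj _ _ h; simp at this
  have hvcc : ∀ i j : Fin k, vc i = vc j → i = j := by
    intro i j h; have := hBinj _ _ h; simpa using this
  have adj_iff : ∀ (u w : V) (hu : u ∈ B) (hw : w ∈ B),
      G.Adj u w ↔ (completeBipartiteGraph (Fin 2) (Fin k)).Adj (φ ⟨u, hu⟩) (φ ⟨w, hw⟩) := by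
    intro u w hu hw
    have h1 : (G.induce B).Adj ⟨u, hu⟩ ⟨w, hw⟩ ↔ G.Adj u w := Iff.rfl
    rw [← h1]
    exact φ.map_rel_iff.symm
  have adjA : ∀ j : Fin k, G.Adj va (vc j) := by
    intro j
    rw [adj_iff va (vc j) hvaB (hvcB j)]
    have e1 : (⟨va, hvaB⟩ : B) = φ.symm (Sum.inl 0) := rfl
    have e2 : (⟨vc j, hvcB j⟩ : B) = φ.symm (Sum.inr j) := rfl
    rw [e1, e2, φ.apply_symm_apply, φ.apply_symm_apply]
    simp
  have adjB : ∀ j : Fin k, G.Adj vb (vc j) := by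
    intro j
    rw [adj_iff vb (vc j) hvbB (hvcB j)]
    have e1 : (⟨vb, hvbB⟩ : B) = φ.symm (Sum.inl 1) := rfl
    have e2 : (⟨vc j, hvcB j⟩ : B) = φ.symm (Sum.inr j) := rfl
    rw [e1, e2, φ.apply_symm_apply, φ.apply_symm_apply]
    simp
  have hBvert : ∀ u ∈ B, u = va ∨ u = vb ∨ ∃ j, u = vc j := by
    intro u hu
    have he : u = ((φ.symm (φ ⟨u, hu⟩) : B) : V) := by rw [φ.symm_apply_apply]
    rcases h : φ ⟨u, hu⟩ with i | j
    · rw [h] at he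
      fin_cases i
      · left; exact he
      · right; left; exact he
    · right; right; exact ⟨j, by rw [h] at he; exact he⟩
  -- the branch sets
  set S : Fin k → Set V := fun j =>
    {v | ∃ hv : v ∈ {u : V | u ≠ vc j},
      ¬ (G.induce {u : V | u ≠ vc j}).Reachable ⟨v, hv⟩ ⟨va, hvac j⟩} with hS_def
  have hS_ne : ∀ j v, v ∈ S j → v ≠ vc j := by
    intro j v hv; exact hv.1
  have hS_not_mem : ∀ j v, v ∉ S j → ∀ hv : v ≠ vc j,
      (G.induce {u : V | u ≠ vc j}).Reachable ⟨v, hv⟩ ⟨va, hvac j⟩ := by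
    intro j v hv hvne
    by_contra h
    exact hv ⟨hvne, h⟩
  have hS_walk : ∀ j v, v ∈ S j → ∀ (p : G.Walk v va), (∀ z ∈ p.support, z ≠ vc j) → False := by
    intro j v hv p hp
    exact hv.2 (aux_reachable_induce_of_walk p hp (hp v p.start_mem_support) (hvac j))
  have haS : ∀ j, va ∉ S j := by
    intro j h
    exact h.2 (Reachable.refl _)
  have hbS : ∀ j, vb ∉ S j := by
    intro j hbmem
    obtain ⟨i, hij⟩ : ∃ i : Fin k, i ≠ j :=
      Fintype.exists_ne_of_one_lt_card (by simp; omega) j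
    refine hS_walk j vb hbmem
      (Walk.cons (adjB i) (Walk.cons (adjA i).symm Walk.nil)) ?_
    intro z hz
    simp only [Walk.support_cons, Walk.support_nil, List.mem_cons, List.mem_singleton] at hz
    rcases hz with rfl | rfl | rfl | h
    · exact hvbc j
    · exact fun e => hij (hvcc i j e)
    · exact hvac j
    · simp at h
  have hcS : ∀ i j, i ≠ j → vc i ∉ S j := by
    intro i j hij hmem
    refine hS_walk j (vc i) hmem (Walk.cons (adjA i).symm Walk.nil) ?_
    intro z hz
    simp only [Walk.support_cons, Walk.support_nil, List.mem_cons, List.mem_singleton] at hz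
    rcases hz with rfl | rfl | h
    · exact fun e => hij (hvcc i j e)
    · exact hvac j
    · simp at h
  have hSnonempty : ∀ j, ∃ v, v ∈ S j := by
    intro j
    obtain ⟨-, -, hncon⟩ := (hcut j).1
    have hnp : ¬ (G.induce {u : V | u ≠ vc j}).Preconnected := by
      intro hp
      haveI : Nonempty {u : V | u ≠ vc j} := ⟨⟨va, hvac j⟩⟩
      exact hncon ⟨hp⟩
    obtain ⟨x, y, hxy⟩ : ∃ x y, ¬ (G.induce {u : V | u ≠ vc j}).Reachable x y := by
      by_contra h
      push_neg at h
      exact hnp fun x y => h x y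
    by_cases hx : (G.induce {u : V | u ≠ vc j}).Reachable x ⟨va, hvac j⟩
    · refine ⟨y.1, ⟨y.2, fun hr => hxy (hx.trans ?_)⟩⟩
      exact hr.symm
    · exact ⟨x.1, ⟨x.2, hx⟩⟩
  have claimA : ∀ j u x, u ∈ S j → G.Adj u x → x = vc j ∨ x ∈ S j := by
    intro j u x hu hadj
    by_cases hx : x = vc j
    · exact Or.inl hx
    right
    by_contra hxS
    have hr := hS_not_mem j x hxS hx
    have hun : u ≠ vc j := hS_ne j u hu
    have hadj' : (G.induce {u : V | u ≠ vc j}).Adj ⟨u, hun⟩ ⟨x, hx⟩ := hadj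
    exact hu.2 (hadj'.reachable.trans hr)
  have hdisj : ∀ i j : Fin k, ∀ v, v ∈ S i → v ∈ S j → i = j := by
    intro i j v hi hj
    by_contra hij
    have main : ∀ (i' j' : Fin k), i' ≠ j' → v ∈ S j' →
        ∀ (q : G.Walk v (vc i')), (∀ u ∈ q.support, u ≠ vc j') → False := by
      intro i' j' hne hvS q hq
      apply hS_walk j' v hvS (q.append (Walk.cons (adjA i').symm Walk.nil))
      intro z hz
      rcases (Walk.mem_support_append_iff _ _).mp hz with h | h
      · exact hq z h
      · simp only [Walk.support_cons, Walk.support_nil, List.mem_cons,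
          List.mem_singleton] at h
        rcases h with rfl | rfl | h
        · exact fun e => hne (hvcc i' j' e)
        · exact hvac j'
        · simp at h
    obtain ⟨p⟩ := hG.preconnected v va
    have hmeet : ∃ u ∈ p.support, u ∈ ({vc i, vc j} : Set V) := by
      by_contra h
      push_neg at h
      refine hS_walk j v hj p (fun z hz e => h z hz ?_)
      rw [e]; simp
    obtain ⟨y, hyT, q, hq1, hq2⟩ := aux_first_in_set p hmeet
    rcases hyT with hy | hy
    · subst hy
      refine main i j hij hj q ?_
      intro u hu e
      have : u = vc i := hq1 u hu (by rw [e]; simp)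
      rw [this] at e
      exact hij (hvcc i j e)
    · rw [Set.mem_singleton_iff] at hy
      subst hy
      refine main j i (Ne.symm hij) hi q ?_
      intro u hu e
      have : u = vc j := hq1 u hu (by rw [e]; simp)
      rw [this] at e
      exact Ne.symm hij (hvcc j i e)
  have fresh : ∀ w1 w2 w3 : V, ∃ i : Fin k, vc i ≠ w1 ∧ vc i ≠ w2 ∧ vc i ≠ w3 := by
    intro w1 w2 w3
    by_contra hcon
    have hsub : Finset.univ.image vc ⊆ ({w1, w2, w3} : Finset V) := by
      intro u hu
      rw [Finset.mem_image] at hu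
      obtain ⟨i, -, rfl⟩ := hu
      by_contra hmem
      simp only [Finset.mem_insert, Finset.mem_singleton] at hmem
      push_neg at hmem
      exact hcon ⟨i, hmem.1, hmem.2.1, hmem.2.2⟩
    have hk3 : k ≤ 3 := by
      have h1 : (Finset.univ.image vc).card = k := by
        rw [Finset.card_image_of_injective _ (fun i j e => hvcc i j e), Finset.card_univ,
          Fintype.card_fin]
      have h2 := Finset.card_le_card hsub
      have h3 : ({w1, w2, w3} : Finset V).card ≤ 3 := by
        refine le_trans (Finset.card_insert_le _ _) ?_
        have := Finset.card_insert_le w2 ({w3} : Finset V)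
        simp at this ⊢
        omega
      omega
    omega
  have toHub : ∀ (z L u : V), (L = va ∨ L = vb) → L ≠ z → u ∈ B → u ≠ z →
      ∃ w : G.Walk u L, ∀ s ∈ w.support, s ∈ B ∧ s ≠ z := by
    intro z L u hL hLz huB huz
    have hLB : L ∈ B := by rcases hL with rfl | rfl; exacts [hvaB, hvbB]
    rcases hBvert u huB with rfl | rfl | ⟨i, rfl⟩
    · rcases hL with rfl | rfl
      · exact ⟨Walk.nil, by intro s hs; simp at hs; subst hs; exact ⟨hvaB, huz⟩⟩
      · obtain ⟨m, hm1, -, -⟩ := fresh z z z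
        refine ⟨Walk.cons (adjA m) (Walk.cons (adjB m).symm Walk.nil), ?_⟩
        intro s hs
        simp only [Walk.support_cons, Walk.support_nil, List.mem_cons,
          List.mem_singleton] at hs
        rcases hs with rfl | rfl | rfl | hs
        exacts [⟨hvaB, huz⟩, ⟨hvcB m, hm1⟩, ⟨hvbB, hLz⟩, by simp at hs]
    · rcases hL with rfl | rfl
      · obtain ⟨m, hm1, -, -⟩ := fresh z z z
        refine ⟨Walk.cons (adjB m) (Walk.cons (adjA m).symm Walk.nil), ?_⟩
        intro s hs
        simp only [Walk.support_cons, Walk.support_nil, List.mem_cons,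
          List.mem_singleton] at hs
        rcases hs with rfl | rfl | rfl | hs
        exacts [⟨hvbB, huz⟩, ⟨hvcB m, hm1⟩, ⟨hvaB, hLz⟩, by simp at hs]
      · exact ⟨Walk.nil, by intro s hs; simp at hs; subst hs; exact ⟨hvbB, huz⟩⟩
    · have hadjL : G.Adj (vc i) L := by
        rcases hL with rfl | rfl
        exacts [(adjA i).symm, (adjB i).symm]
      refine ⟨Walk.cons hadjL Walk.nil, ?_⟩
      intro s hs
      simp only [Walk.support_cons, Walk.support_nil, List.mem_cons,
        List.mem_singleton] at hs
      rcases hs with rfl | rfl | hs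
      exacts [⟨hvcB i, huz⟩, ⟨hLB, hLz⟩, by simp at hs]
  have neighbor : ∀ (j : Fin k) (x : V), G.Adj (vc j) x → x = va ∨ x = vb ∨ x ∈ S j := by
    intro j x hadj
    by_cases hxB : x ∈ B
    · rcases hBvert x hxB with rfl | rfl | ⟨i, rfl⟩
      · exact Or.inl rfl
      · exact Or.inr (Or.inl rfl)
      · exfalso
        have h := (adj_iff (vc j) (vc i) (hvcB j) (hvcB i)).mp hadj
        have e1 : (⟨vc j, hvcB j⟩ : B) = φ.symm (Sum.inr j) := rfl
        have e2 : (⟨vc i, hvcB i⟩ : B) = φ.symm (Sum.inr i) := rfl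
        rw [e1, e2, φ.apply_symm_apply, φ.apply_symm_apply] at h
        simp at h
    right; right
    by_contra hxS
    have hxne : x ≠ vc j := Ne.symm hadj.ne
    have hreach := hS_not_mem j x hxS hxne
    obtain ⟨w0, hw0⟩ := aux_walk_of_reachable_induce _ _ hreach
    have hmeet : ∃ u' ∈ w0.support, u' ∈ B := ⟨va, w0.end_mem_support, hvaB⟩
    obtain ⟨y, hyB, q0, hq01, hq02⟩ := aux_first_in_set w0 hmeet
    set q : G.Walk x y := q0.bypass with hq_def
    have hqpath : q.IsPath := q0.bypass_isPath
    have hqsup : ∀ u' ∈ q.support, u' ∈ q0.support := fun u' hu' => q0.support_bypass_subset hu'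
    have hqB : ∀ u' ∈ q.support, u' ∈ B → u' = y := fun u' hu' => hq01 u' (hqsup u' hu')
    have hqnc : ∀ u' ∈ q.support, u' ≠ vc j := fun u' hu' => hw0 u' (hq02 u' (hqsup u' hu'))
    have hcq : vc j ∉ q.support := fun h => (hqnc _ h) rfl
    set E : G.Walk (vc j) y := Walk.cons hadj q with hE_def
    have hEpath : E.IsPath := hqpath.cons hcq
    set C : Set V := B ∪ {v | v ∈ E.support} with hC_def
    have hBC : B ⊆ C := Set.subset_union_left
    have master : ∀ (z u1 u2 : V), u1 ∈ C → u2 ∈ C → u1 ≠ z → u2 ≠ z →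
        ∃ w : G.Walk u1 u2, ∀ s ∈ w.support, s ∈ C ∧ s ≠ z := by
      intro z u1 u2 h1 h2 h1z h2z
      have reach : ∀ (u' : V), u' ∈ C → u' ≠ z → ∃ e, e ∈ B ∧ e ≠ z ∧
          ∃ w : G.Walk u' e, ∀ s ∈ w.support, s ∈ C ∧ s ≠ z := by
        intro u' hu' huz'
        rcases hu' with huB' | huE'
        · exact ⟨u', huB', huz', Walk.nil, by
            intro s hs; simp at hs; subst hs; exact ⟨Or.inl huB', huz'⟩⟩
        · obtain ⟨e, he, hez, w, hw1, hw2⟩ := aux_escape_path E hEpath huE' (Ne.symm huz')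
          refine ⟨e, ?_, hez, w, fun s hs => ⟨Or.inr (hw1 s hs), ?_⟩⟩
          · rcases he with rfl | rfl
            · exact hvcB j
            · exact hyB
          · intro hsz; rw [hsz] at hs; exact hw2 hs
      obtain ⟨e1, he1B, he1z, w1, hw1⟩ := reach u1 h1 h1z
      obtain ⟨e2, he2B, he2z, w2, hw2⟩ := reach u2 h2 h2z
      obtain ⟨L, hLor, hLz⟩ : ∃ L, (L = va ∨ L = vb) ∧ L ≠ z := by
        by_cases hza : va = z
        · exact ⟨vb, Or.inr rfl, by rw [← hza]; exact Ne.symm hvab⟩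
        · exact ⟨va, Or.inl rfl, hza⟩
      obtain ⟨p1, hp1⟩ := toHub z L e1 hLor hLz he1B he1z
      obtain ⟨p2, hp2⟩ := toHub z L e2 hLor hLz he2B he2z
      refine ⟨(w1.append p1).append (p2.reverse.append w2.reverse), ?_⟩
      intro s hs
      rcases (Walk.mem_support_append_iff _ _).mp hs with hs | hs
      · rcases (Walk.mem_support_append_iff _ _).mp hs with hs | hs
        · exact hw1 s hs
        · exact ⟨hBC (hp1 s hs).1, (hp1 s hs).2⟩
      · rcases (Walk.mem_support_append_iff _ _).mp hs with hs | hs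
        · rw [Walk.support_reverse, List.mem_reverse] at hs
          exact ⟨hBC (hp2 s hs).1, (hp2 s hs).2⟩
        · rw [Walk.support_reverse, List.mem_reverse] at hs
          exact hw2 s hs
    have hCconn : (G.induce C).Connected := by
      rw [SimpleGraph.connected_iff]
      refine ⟨?_, ⟨⟨va, hBC hvaB⟩⟩⟩
      rintro ⟨u1, h1⟩ ⟨u2, h2⟩
      obtain ⟨m, hm1, hm2, -⟩ := fresh u1 u2 u2
      obtain ⟨w, hw⟩ := master (vc m) u1 u2 h1 h2 (fun e => hm1 e.symm) (fun e => hm2 e.symm)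
      exact aux_reachable_induce_of_walk w (fun z hz => (hw z hz).1) h1 h2
    have hnocut : ∀ v, ¬ IsCutVertex (G.induce C) v := by
      intro v hvcut
      obtain ⟨-, -, hncon⟩ := hvcut
      apply hncon
      have hiso : ((G.induce C).induce {u' : ↥C | u' ≠ v}) ≃g
          (G.induce {s : V | s ∈ C ∧ s ≠ (v : V)}) := by
        refine ⟨⟨fun u' => ⟨u'.1.1, u'.1.2, fun e => u'.2 (Subtype.ext e)⟩,
                 fun s => ⟨⟨s.1, s.2.1⟩, fun e => s.2.2 (congrArg Subtype.val e)⟩, ?_, ?_⟩, ?_⟩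
        · intro u'; rfl
        · intro s; rfl
        · intro u1 u2; exact Iff.rfl
      rw [hiso.connected_iff, SimpleGraph.connected_iff]
      constructor
      · rintro ⟨u1, h1, h1v⟩ ⟨u2, h2, h2v⟩
        obtain ⟨w, hw⟩ := master v.1 u1 u2 h1 h2 h1v h2v
        exact aux_reachable_induce_of_walk (S := {s : V | s ∈ C ∧ s ≠ (v : V)}) w
          (fun z hz => ⟨(hw z hz).1, (hw z hz).2⟩) ⟨h1, h1v⟩ ⟨h2, h2v⟩
      · obtain ⟨m, hm, -, -⟩ := fresh v.1 v.1 v.1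
        exact ⟨⟨vc m, hBC (hvcB m), hm⟩⟩
    have hCeq := hB.2.2 C hBC hCconn hnocut
    have hxC : x ∈ C := Or.inr (by
      show x ∈ E.support
      rw [hE_def, Walk.support_cons]
      exact List.mem_cons_of_mem _ q.start_mem_support)
    rw [hCeq] at hxC
    exact hxB hxC
  have escape : ∀ j u x, u ∈ S j → (GraphSquare G).Adj u x → x ∉ S j →
      x = va ∨ x = vb ∨ x = vc j := by
    intro j u x hu hadj hxS
    obtain ⟨hne, h | ⟨w, h1, h2⟩⟩ := hadj
    · rcases claimA j u x hu h with h' | h'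
      · exact Or.inr (Or.inr h')
      · exact absurd h' hxS
    · rcases claimA j u w hu h1 with hw | hw
      · rcases neighbor j x (hw ▸ h2) with h' | h' | h'
        · exact Or.inl h'
        · exact Or.inr (Or.inl h')
        · exact absurd h' hxS
      · rcases claimA j w x hw h2 with h' | h'
        · exact Or.inr (Or.inr h')
        · exact absurd h' hxS
  -- final counting on the hamiltonian cycle
  set T : Fin k → Set V := fun j => S j ∪ {vc j} with hT_def
  have hTdisj : ∀ i j : Fin k, ∀ v, v ∈ T i → v ∈ T j → i = j := by
    intro i j v hi hj
    rcases hi with hi | hi <;> rcases hj with hj | hj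
    · exact hdisj i j v hi hj
    · rw [Set.mem_singleton_iff] at hj
      by_contra hij
      exact hcS j i (fun e => hij e.symm) (hj ▸ hi)
    · rw [Set.mem_singleton_iff] at hi
      by_contra hij
      exact hcS i j hij (hi ▸ hj)
    · rw [Set.mem_singleton_iff] at hi hj
      exact hvcc i j (hi ▸ hj ▸ rfl)
  have hTa : ∀ j, va ∉ T j := by
    intro j h
    rcases h with h | h
    · exact haS j h
    · exact hvac j h
  have hTb : ∀ j, vb ∉ T j := by
    intro j h
    rcases h with h | h
    · exact hbS j h
    · exact hvbc j h
  have key : ∀ j : Fin k, ∃ d, d ∈ c.darts ∧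
      ((d.fst ∈ T j ∧ (d.snd = va ∨ d.snd = vb)) ∨
       ((d.fst = va ∨ d.fst = vb) ∧ d.snd ∈ T j)) := by
    intro j
    obtain ⟨s, hs⟩ := hSnonempty j
    have hsT : s ∈ T j := Or.inl hs
    obtain ⟨⟨d1, hd1, hd1f, hd1s⟩, ⟨d2, hd2, hd2f, hd2s⟩⟩ := aux_cross hc (S j) hs (haS j)
    rcases escape j d1.fst d1.snd hd1f d1.adj hd1s with h | h | h
    · exact ⟨d1, hd1, Or.inl ⟨Or.inl hd1f, Or.inl h⟩⟩
    · exact ⟨d1, hd1, Or.inl ⟨Or.inl hd1f, Or.inr h⟩⟩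
    rcases escape j d2.snd d2.fst hd2s d2.adj.symm hd2f with h' | h' | h'
    · exact ⟨d2, hd2, Or.inr ⟨Or.inl h', Or.inl hd2s⟩⟩
    · exact ⟨d2, hd2, Or.inr ⟨Or.inr h', Or.inl hd2s⟩⟩
    obtain ⟨⟨d3, hd3, hd3f, hd3s⟩, -⟩ := aux_cross hc (T j) hsT (hTa j)
    rcases hd3f with hf | hf
    · have hd3sS : d3.snd ∉ S j := fun hmem => hd3s (Or.inl hmem)
      rcases escape j d3.fst d3.snd hf d3.adj hd3sS with h'' | h'' | h''
      · exact ⟨d3, hd3, Or.inl ⟨Or.inl hf, Or.inl h''⟩⟩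
      · exact ⟨d3, hd3, Or.inl ⟨Or.inl hf, Or.inr h''⟩⟩
      · exact absurd (Or.inr (h'' ▸ rfl) : d3.snd ∈ T j) hd3s
    · rw [Set.mem_singleton_iff] at hf
      have hdd : d3 = d2 := aux_dart_eq_of_fst hc hd3 hd2 (by rw [hf, h'])
      exact absurd (Or.inl (hdd ▸ hd2s) : d3.snd ∈ T j) hd3s
  choose d hdmem hdside using key
  have hfinj : Function.Injective (fun j : Fin k =>
      ((((d j).fst = va ∨ (d j).fst = vb) : Prop),
       (((d j).fst = va ∨ (d j).snd = va) : Prop))) := by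
    intro i j hij
    have h1 : ((d i).fst = va ∨ (d i).fst = vb) ↔ ((d j).fst = va ∨ (d j).fst = vb) :=
      iff_of_eq (congrArg Prod.fst hij)
    have h2 : ((d i).fst = va ∨ (d i).snd = va) ↔ ((d j).fst = va ∨ (d j).snd = va) :=
      iff_of_eq (congrArg Prod.snd hij)
    by_cases hfi : (d i).fst = va ∨ (d i).fst = vb
    · have hfj := h1.mp hfi
      have hTi : (d i).snd ∈ T i := by
        rcases hdside i with ⟨hfT, -⟩ | ⟨-, hsT⟩
        · rcases hfi with e | e
          · exact absurd hfT (by rw [e]; exact hTa i)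
          · exact absurd hfT (by rw [e]; exact hTb i)
        · exact hsT
      have hTj : (d j).snd ∈ T j := by
        rcases hdside j with ⟨hfT, -⟩ | ⟨-, hsT⟩
        · rcases hfj with e | e
          · exact absurd hfT (by rw [e]; exact hTa j)
          · exact absurd hfT (by rw [e]; exact hTb j)
        · exact hsT
      have hsne : (d i).snd ≠ va := fun e => hTa i (e ▸ hTi)
      have hsnej : (d j).snd ≠ va := fun e => hTa j (e ▸ hTj)
      have hdd : d i = d j := by
        rcases hfi with e | e <;> rcases hfj with e' | e'
        · exact aux_dart_eq_of_fst hc (hdmem i) (hdmem j) (by rw [e, e'])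
        · exfalso
          rcases h2.mp (Or.inl e) with e2 | e2
          · exact hvab (by rw [← e', ← e2])
          · exact hsnej e2
        · exfalso
          rcases h2.mpr (Or.inl e') with e2 | e2
          · exact hvab (by rw [← e, ← e2])
          · exact hsne e2
        · exact aux_dart_eq_of_fst hc (hdmem i) (hdmem j) (by rw [e, e'])
      exact hTdisj i j (d i).snd hTi (by rw [hdd]; exact hTj)
    · have hfj : ¬ ((d j).fst = va ∨ (d j).fst = vb) := fun h => hfi (h1.mpr h)
      have hTi : (d i).fst ∈ T i := by
        rcases hdside i with ⟨hfT, -⟩ | ⟨hfab, -⟩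
        · exact hfT
        · exact absurd hfab hfi
      have hTj : (d j).fst ∈ T j := by
        rcases hdside j with ⟨hfT, -⟩ | ⟨hfab, -⟩
        · exact hfT
        · exact absurd hfab hfj
      have hsi : (d i).snd = va ∨ (d i).snd = vb := by
        rcases hdside i with ⟨-, h⟩ | ⟨hfab, -⟩
        · exact h
        · exact absurd hfab hfi
      have hsj : (d j).snd = va ∨ (d j).snd = vb := by
        rcases hdside j with ⟨-, h⟩ | ⟨hfab, -⟩
        · exact h
        · exact absurd hfab hfj
      have hfnei : (d i).fst ≠ va := fun e => hfi (Or.inl e)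
      have hfnej2 : (d j).fst ≠ va := fun e => hfj (Or.inl e)
      have hdd : d i = d j := by
        rcases hsi with e | e <;> rcases hsj with e' | e'
        · exact aux_dart_eq_of_snd hc (hdmem i) (hdmem j) (by rw [e, e'])
        · exfalso
          rcases h2.mp (Or.inr e) with e2 | e2
          · exact hfnej2 e2
          · exact hvab (by rw [← e2, ← e'])
        · exfalso
          rcases h2.mpr (Or.inr e') with e2 | e2
          · exact hfnei e2
          · exact hvab (by rw [← e2, ← e])
        · exact aux_dart_eq_of_snd hc (hdmem i) (hdmem j) (by rw [e, e'])
      exact hTdisj i j (d i).fst hTi (by rw [hdd]; exact hTj)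
  have hcard := Fintype.card_le_of_injective _ hfinj
  simp [Fintype.card_prod, Fintype.card_prop] at hcard
  omega
end

section
/- Let r ≥ 3 and let G be a connected graph containing a cycle C_r as a block such that all r vertices of this cycle are cutvertices of G. Then for any two distinct vertices x, y of this cycle there is no hamiltonian path from x to y in the square G²; in particular G² is not hamiltonian connected. -/
open SimpleGraph Function

variable {V : Type*}

section MyAux
variable {G : SimpleGraph V}

lemma walk_of_induce {s : Set V} {a b : s} (p : (G.induce s).Walk a b) :
    ∃ q : G.Walk a b, ∀ x ∈ q.support, ∃ x' ∈ p.support, x = ↑x' := by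
  induction p with
  | nil =>
    refine ⟨SimpleGraph.Walk.nil, ?_⟩
    intro x hx; simp only [SimpleGraph.Walk.support_nil, List.mem_singleton] at hx
    exact ⟨_, by simp, hx⟩
  | @cons u w c h p ih =>
    obtain ⟨q, hq⟩ := ih
    refine ⟨SimpleGraph.Walk.cons (h : G.Adj _ _) q, ?_⟩
    intro x hx
    change x ∈ (u : V) :: q.support at hx
    rw [List.mem_cons] at hx
    rcases hx with hx | hx
    · exact ⟨u, by simp, hx⟩
    · obtain ⟨x', hx', rfl⟩ := hq x hx
      exact ⟨x', by simp [hx'], rfl⟩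

lemma walk_to_induce {s : Set V} {a b : V} (p : G.Walk a b)
    (hs : ∀ x ∈ p.support, x ∈ s) (ha : a ∈ s) (hb : b ∈ s) :
    ∃ q : (G.induce s).Walk ⟨a, ha⟩ ⟨b, hb⟩, ∀ x ∈ q.support, ↑x ∈ p.support := by
  induction p with
  | nil => exact ⟨SimpleGraph.Walk.nil, by intro x hx; simp at hx; simp [hx]⟩
  | @cons u w c h p ih =>
    have hw : w ∈ s := hs w (by simp [SimpleGraph.Walk.support_cons, p.start_mem_support])
    obtain ⟨q, hq⟩ := ih (fun x hx => hs x (by simp [SimpleGraph.Walk.support_cons, hx])) hw hb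
    refine ⟨SimpleGraph.Walk.cons (show (G.induce s).Adj ⟨u, ha⟩ ⟨w, hw⟩ from h) q, ?_⟩
    intro x hx
    rw [SimpleGraph.Walk.support_cons, List.mem_cons] at hx
    rcases hx with hx | hx
    · simp [hx]
    · simp [SimpleGraph.Walk.support_cons, hq x hx]

lemma reachable_induce_of_walk {s : Set V} {a b : V} (p : G.Walk a b)
    (hs : ∀ x ∈ p.support, x ∈ s) (ha : a ∈ s) (hb : b ∈ s) :
    (G.induce s).Reachable ⟨a, ha⟩ ⟨b, hb⟩ := by
  obtain ⟨q, -⟩ := walk_to_induce p hs ha hb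
  exact ⟨q⟩

/-- connectivity of an induced subgraph, expressed with walks in `G`. -/
def ConnOn (G : SimpleGraph V) (A : Set V) : Prop :=
  A.Nonempty ∧ ∀ a ∈ A, ∀ b ∈ A, ∃ p : G.Walk a b, ∀ x ∈ p.support, x ∈ A

lemma connOn_iff {A : Set V} : ConnOn G A ↔ (G.induce A).Connected := by
  constructor
  · rintro ⟨⟨a0, ha0⟩, h⟩
    rw [connected_iff]
    refine ⟨fun x y => ?_, ⟨⟨a0, ha0⟩⟩⟩
    obtain ⟨p, hp⟩ := h x x.2 y y.2
    have := reachable_induce_of_walk p hp x.2 y.2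
    simpa using this
  · intro h
    obtain ⟨a0⟩ := h.nonempty
    refine ⟨⟨a0, a0.2⟩, fun a ha b hb => ?_⟩
    obtain ⟨p⟩ := h.preconnected ⟨a, ha⟩ ⟨b, hb⟩
    obtain ⟨q, hq⟩ := walk_of_induce p
    exact ⟨q, fun x hx => by obtain ⟨x', -, rfl⟩ := hq x hx; exact x'.2⟩

lemma connOn_of_hub {A : Set V} {h : V} (hh : h ∈ A)
    (hw : ∀ a ∈ A, ∃ p : G.Walk a h, ∀ x ∈ p.support, x ∈ A) : ConnOn G A := by
  refine ⟨⟨h, hh⟩, fun a ha b hb => ?_⟩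
  obtain ⟨p, hp⟩ := hw a ha
  obtain ⟨q, hq⟩ := hw b hb
  refine ⟨p.append q.reverse, fun x hx => ?_⟩
  rw [SimpleGraph.Walk.mem_support_append_iff] at hx
  rcases hx with hx | hx
  · exact hp x hx
  · exact hq x (by simpa [SimpleGraph.Walk.support_reverse] using hx)

/-- transfer double-induce connectivity -/
lemma induce_induce_connected_iff {A : Set V} {T : Set ↥A} :
    ((G.induce A).induce T).Connected ↔ ConnOn G (Subtype.val '' T) := by
  constructor
  · intro h
    obtain ⟨a0⟩ := h.nonempty
    refine ⟨⟨a0.1.1, ⟨a0.1, a0.2, rfl⟩⟩, ?_⟩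
    rintro a ⟨⟨a, haA⟩, haT, rfl⟩ b ⟨⟨b, hbA⟩, hbT, rfl⟩
    obtain ⟨p⟩ := h.preconnected ⟨⟨a, haA⟩, haT⟩ ⟨⟨b, hbA⟩, hbT⟩
    obtain ⟨q1, hq1⟩ := walk_of_induce p
    obtain ⟨q2, hq2⟩ := walk_of_induce q1
    refine ⟨q2, fun x hx => ?_⟩
    obtain ⟨x1, hx1, rfl⟩ := hq2 x hx
    obtain ⟨x2, -, rfl⟩ := hq1 x1 hx1
    exact ⟨x2.1, x2.2, rfl⟩
  · rintro ⟨⟨w0, hw0⟩, h⟩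
    rw [connected_iff]
    constructor
    · rintro ⟨⟨a, haA⟩, haT⟩ ⟨⟨b, hbA⟩, hbT⟩
      obtain ⟨p, hp⟩ := h a ⟨⟨a, haA⟩, haT, rfl⟩ b ⟨⟨b, hbA⟩, hbT, rfl⟩
      have hpA : ∀ x ∈ p.support, x ∈ A := by
        intro x hx; obtain ⟨x', -, rfl⟩ := hp x hx; exact x'.2
      obtain ⟨q1, hq1⟩ := walk_to_induce p hpA haA hbA
      have hq1T : ∀ x ∈ q1.support, x ∈ T := by
        intro x hx
        obtain ⟨x', hx', hval⟩ := hp x.1 (hq1 x hx)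
        have : x = x' := Subtype.ext hval.symm
        exact this ▸ hx'
      obtain ⟨q2, -⟩ := walk_to_induce q1 hq1T haT hbT
      exact ⟨q2⟩
    · obtain ⟨x', hx', rfl⟩ := hw0
      exact ⟨⟨x', hx'⟩⟩

lemma ne_end_not_mem_takeUntil [DecidableEq V] {a c m : V} {t : G.Walk a c}
    (ht : t.IsPath) (hm : m ∈ t.support) (hne : m ≠ c) :
    c ∉ (t.takeUntil m hm).support := by
  intro hc
  have hspec := t.take_spec hm
  have hnd : t.support.Nodup := ht.support_nodup
  rw [← hspec, SimpleGraph.Walk.support_append, List.nodup_append] at hnd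
  obtain ⟨-, -, hdisj⟩ := hnd
  have hctail : c ∈ (t.dropUntil m hm).support.tail := by
    have hcend : c ∈ (t.dropUntil m hm).support := SimpleGraph.Walk.end_mem_support _
    rw [SimpleGraph.Walk.support_eq_cons] at hcend
    rcases List.mem_cons.mp hcend with h | h
    · exact absurd h.symm hne
    · exact h
  exact hdisj _ hc _ hctail rfl

lemma ne_start_not_mem_dropUntil [DecidableEq V] {c b m : V} {t : G.Walk c b}
    (ht : t.IsPath) (hm : m ∈ t.support) (hne : m ≠ c) :
    c ∉ (t.dropUntil m hm).support := by
  intro hc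
  have hspec := t.take_spec hm
  have hnd : t.support.Nodup := ht.support_nodup
  rw [← hspec, SimpleGraph.Walk.support_append, List.nodup_append] at hnd
  obtain ⟨-, -, hdisj⟩ := hnd
  have hctail : c ∈ (t.dropUntil m hm).support.tail := by
    rw [SimpleGraph.Walk.support_eq_cons] at hc
    rcases List.mem_cons.mp hc with h | h
    · exact absurd h.symm hne
    · exact h
  exact hdisj _ (SimpleGraph.Walk.start_mem_support _) _ hctail rfl

/-- path splitting: from any vertex of a path, avoiding a given vertex `c` of the path,
we can go within the path either back to the start or forward to the end. -/
lemma path_split [DecidableEq V] {a b c m : V} {t : G.Walk a b} (ht : t.IsPath)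
    (hc : c ∈ t.support) (hm : m ∈ t.support) (hne : m ≠ c) :
    (∃ w : G.Walk a m, c ∉ w.support ∧ ∀ x ∈ w.support, x ∈ t.support) ∨
    (∃ w : G.Walk m b, c ∉ w.support ∧ ∀ x ∈ w.support, x ∈ t.support) := by
  by_cases hmem : m ∈ (t.takeUntil c hc).support
  · left
    refine ⟨(t.takeUntil c hc).takeUntil m hmem, ?_, ?_⟩
    · exact ne_end_not_mem_takeUntil (ht.takeUntil hc) hmem hne
    · intro x hx
      exact t.support_takeUntil_subset hc ((t.takeUntil c hc).support_takeUntil_subset hmem hx)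
  · right
    have hmem' : m ∈ (t.dropUntil c hc).support := by
      have := t.take_spec hc
      rw [← this, SimpleGraph.Walk.mem_support_append_iff] at hm
      tauto
    refine ⟨(t.dropUntil c hc).dropUntil m hmem', ?_, ?_⟩
    · exact ne_start_not_mem_dropUntil (ht.dropUntil hc) hmem' hne
    · intro x hx
      exact t.support_dropUntil_subset hc ((t.dropUntil c hc).support_dropUntil_subset hmem' hx)

/-- `Avoid G v a b` : there is a walk from `a` to `b` avoiding `v`. -/
def Avoid (G : SimpleGraph V) (v a b : V) : Prop := ∃ p : G.Walk a b, v ∉ p.support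

lemma Avoid.symm {v a b : V} (h : Avoid G v a b) : Avoid G v b a := by
  obtain ⟨p, hp⟩ := h
  exact ⟨p.reverse, by simpa [SimpleGraph.Walk.support_reverse] using hp⟩

lemma Avoid.trans {v a b c : V} (h1 : Avoid G v a b) (h2 : Avoid G v b c) : Avoid G v a c := by
  obtain ⟨p, hp⟩ := h1; obtain ⟨q, hq⟩ := h2
  refine ⟨p.append q, fun h => ?_⟩
  rw [SimpleGraph.Walk.mem_support_append_iff] at h
  tauto
end MyAux
section MyAux2
variable {G : SimpleGraph V} {B : Set V}

/-- the union of the components of `G - v` not meeting `B \ {v}`. -/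
def Sv (G : SimpleGraph V) (B : Set V) (v : V) : Set V :=
  {w | w ≠ v ∧ ∀ b ∈ B, b ≠ v → ¬ Avoid G v w b}

def Wst (G : SimpleGraph V) (B : Set V) : Set V := {w | ∃ v ∈ B, w ∈ Sv G B v}

lemma Sv_not_mem_B {v w : V} (hw : w ∈ Sv G B v) : w ∉ B := by
  intro hwB
  exact hw.2 w hwB hw.1 ⟨SimpleGraph.Walk.nil, by simp [Ne.symm hw.1]⟩

lemma Sv_closure {v w z : V} (hw : w ∈ Sv G B v) (hadj : G.Adj w z) (hz : z ≠ v) :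
    z ∈ Sv G B v := by
  refine ⟨hz, fun b hb hbv hav => ?_⟩
  obtain ⟨p, hp⟩ := hav
  refine hw.2 b hb hbv ⟨SimpleGraph.Walk.cons hadj p, ?_⟩
  rw [SimpleGraph.Walk.support_cons, List.mem_cons]
  rintro (h | h)
  · exact hw.1 h.symm
  · exact hp h

lemma Sv_disjoint (hG : G.Connected) {u v w : V} (hu : u ∈ B) (hv : v ∈ B) (huv : u ≠ v)
    (hwu : w ∈ Sv G B u) (hwv : w ∈ Sv G B v) : False := by
  classical
  obtain ⟨p0⟩ := hG w u
  have hp : (p0.toPath : G.Walk w u).IsPath := p0.toPath.2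
  set p : G.Walk w u := ↑p0.toPath with hpdef
  have hvp : v ∈ p.support := by
    by_contra hvp
    exact hwv.2 u hu huv ⟨p, hvp⟩
  set t : G.Walk w v := p.takeUntil v hvp with htdef
  have ht : t.IsPath := hp.takeUntil hvp
  have hut : u ∈ t.support := by
    by_contra hut
    exact hwu.2 v hv (Ne.symm huv) ⟨t, hut⟩
  have hv_notin : v ∉ (t.takeUntil u hut).support :=
    ne_end_not_mem_takeUntil ht hut huv
  exact hwv.2 u hu huv ⟨t.takeUntil u hut, hv_notin⟩

lemma Wst_not_mem_B {w : V} (hw : w ∈ Wst G B) : w ∉ B := by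
  obtain ⟨v, -, hv⟩ := hw; exact Sv_not_mem_B hv

/-- crossing lemma (b): two consecutive `W`-vertices lie in the same `Sv`. -/
lemma crossing_b (hG : G.Connected) {u v w z : V} (hu : u ∈ B) (hv : v ∈ B)
    (hw : w ∈ Sv G B u) (hz : z ∈ Sv G B v) (hadj : (GraphSquare G).Adj w z) : u = v := by
  by_contra huv
  obtain ⟨-, hcase⟩ := (show w ≠ z ∧ (G.Adj w z ∨ ∃ m, G.Adj w m ∧ G.Adj m z) from hadj)
  have hzu : z ≠ u := fun h => Sv_not_mem_B hz (h ▸ hu)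
  have hvu' : v ≠ u := Ne.symm huv
  rcases hcase with h | ⟨m, h1, h2⟩
  · exact Sv_disjoint hG hu hv huv (Sv_closure hw h hzu) hz
  · by_cases hmu : m = u
    · have : u ∈ Sv G B v := Sv_closure hz (hmu ▸ h2.symm) huv
      exact Sv_not_mem_B this hu
    · have hm : m ∈ Sv G B u := Sv_closure hw h1 hmu
      have : z ∈ Sv G B u := Sv_closure hm h2 hzu
      exact Sv_disjoint hG hu hv huv this hz

end MyAux2
section MyAux3
variable {G : SimpleGraph V} {B : Set V}

lemma B_minus_connOn (hB : IsBlock G B) (hex : ∀ c : V, ∃ b ∈ B, b ≠ c)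
    {c : V} (hc : c ∈ B) : ConnOn G (B \ {c}) := by
  have h1 := hB.2.1 ⟨c, hc⟩
  rw [IsCutVertex] at h1
  push_neg at h1
  have hne : ({u : ↥B | u ≠ ⟨c, hc⟩} : Set ↥B).Nonempty := by
    obtain ⟨b, hbB, hbc⟩ := hex c
    exact ⟨⟨b, hbB⟩, fun h => hbc (congrArg Subtype.val h)⟩
  have h2 := h1 hB.1 hne
  have h3 := induce_induce_connected_iff.mp h2
  have : (Subtype.val '' {u : ↥B | u ≠ ⟨c, hc⟩} : Set V) = B \ {c} := by
    ext x
    constructor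
    · rintro ⟨⟨x, hxB⟩, hx, rfl⟩
      exact ⟨hxB, fun h => hx (Subtype.ext h)⟩
    · rintro ⟨hxB, hxc⟩
      exact ⟨⟨x, hxB⟩, fun h => hxc (congrArg Subtype.val h), rfl⟩
  rwa [this] at h3

lemma B_minus_avoid (hB : IsBlock G B) (hex : ∀ c : V, ∃ b ∈ B, b ≠ c)
    {v b b' : V} (hv : v ∈ B) (hb : b ∈ B) (hb' : b' ∈ B) (hbv : b ≠ v) (hb'v : b' ≠ v) :
    Avoid G v b b' := by
  obtain ⟨p, hp⟩ := (B_minus_connOn hB hex hv).2 b ⟨hb, hbv⟩ b' ⟨hb', hb'v⟩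
  exact ⟨p, fun h => (hp v h).2 rfl⟩

lemma Sv_nonempty (hB : IsBlock G B) (hex : ∀ c : V, ∃ b ∈ B, b ≠ c)
    {v : V} (hv : v ∈ B) (hcutv : IsCutVertex G v) : (Sv G B v).Nonempty := by
  obtain ⟨-, hne, hnc⟩ := hcutv
  rw [connected_iff] at hnc
  push_neg at hnc
  have hNE : Nonempty ↥({u : V | u ≠ v}) := by
    obtain ⟨u, hu⟩ := hne; exact ⟨⟨u, hu⟩⟩
  have hnp : ¬ (G.induce {u : V | u ≠ v}).Preconnected := fun h => (hnc h).false hNE.some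
  rw [SimpleGraph.Preconnected] at hnp
  push_neg at hnp
  obtain ⟨a, b, hab⟩ := hnp
  obtain ⟨b₀, hb₀B, hb₀v⟩ := hex v
  -- at least one of a, b cannot reach b₀ avoiding v
  have key : ∀ u : ↥({u : V | u ≠ v}), Avoid G v ↑u b₀ →
      ∀ u' : ↥({u : V | u ≠ v}), Avoid G v ↑u' b₀ → (G.induce {u : V | u ≠ v}).Reachable u u' := by
    intro u hu u' hu'
    obtain ⟨p, hp⟩ := hu.trans hu'.symm
    have := reachable_induce_of_walk (s := {u : V | u ≠ v}) p
      (fun x hx => fun hxv => hp (hxv ▸ hx)) u.2 u'.2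
    simpa using this
  have : ¬ Avoid G v ↑a b₀ ∨ ¬ Avoid G v ↑b b₀ := by
    by_contra h
    push_neg at h
    exact hab (key a h.1 b h.2)
  -- the failing one is in `Sv`
  rcases this with h | h
  · refine ⟨↑a, a.2, fun c hc hcv hav => h ?_⟩
    exact hav.trans (B_minus_avoid hB hex hv hc hb₀B hcv hb₀v)
  · refine ⟨↑b, b.2, fun c hc hcv hav => h ?_⟩
    exact hav.trans (B_minus_avoid hB hex hv hc hb₀B hcv hb₀v)

end MyAux3
section MyAux4
variable {G : SimpleGraph V} {B : Set V}

/-- first hit of `B` along a walk ending in `B`. -/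
lemma first_hit {z b : V} (q : G.Walk z b) (hb : b ∈ B) :
    ∃ b' ∈ B, ∃ q' : G.Walk z b',
      (∀ x ∈ q'.support, x ∈ q.support) ∧ (∀ x ∈ q'.support, x ∈ B → x = b') := by
  induction q with
  | nil => exact ⟨_, hb, SimpleGraph.Walk.nil, by simp, by simp⟩
  | @cons u w c h p ih =>
    by_cases hu : u ∈ B
    · exact ⟨u, hu, SimpleGraph.Walk.nil, by simp, by simp⟩
    · obtain ⟨b', hb'B, q', hsub, honly⟩ := ih hb
      refine ⟨b', hb'B, SimpleGraph.Walk.cons h q', ?_, ?_⟩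
      · intro x hx
        rw [SimpleGraph.Walk.support_cons, List.mem_cons] at hx ⊢
        rcases hx with hx | hx
        · exact Or.inl hx
        · exact Or.inr (hsub x hx)
      · intro x hx hxB
        rw [SimpleGraph.Walk.support_cons, List.mem_cons] at hx
        rcases hx with rfl | hx
        · exact absurd hxB hu
        · exact honly x hx hxB

lemma ear (hG : G.Connected) (hB : IsBlock G B) (hex : ∀ c : V, ∃ b ∈ B, b ≠ c)
    {v z : V} (hv : v ∈ B) (hadj : G.Adj v z) (hzW : z ∉ Wst G B) : z ∈ B := by
  classical
  by_contra hzB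
  have hzv : z ≠ v := hadj.ne'
  have hzS : z ∉ Sv G B v := fun h => hzW ⟨v, hv, h⟩
  have : ∃ b ∈ B, b ≠ v ∧ Avoid G v z b := by
    by_contra h
    push_neg at h
    exact hzS ⟨hzv, fun b hb hbv hav => h b hb hbv hav⟩
  obtain ⟨b, hbB, hbv, q0, hq0⟩ := this
  obtain ⟨b', hb'B, q1, hq1sub, hq1B⟩ := first_hit (B := B) q0 hbB
  set q' : G.Walk z b' := ↑q1.toPath with hq'def
  have hq'path : q'.IsPath := q1.toPath.2
  have hq'sub : ∀ x ∈ q'.support, x ∈ q0.support :=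
    fun x hx => hq1sub x (q1.support_toPath_subset hx)
  have hq'B : ∀ x ∈ q'.support, x ∈ B → x = b' :=
    fun x hx => hq1B x (q1.support_toPath_subset hx)
  have hvq' : v ∉ q'.support := fun h => hq0 (hq'sub v h)
  have hb'v : b' ≠ v := fun h => hvq' (h ▸ q'.end_mem_support)
  have hzb' : z ≠ b' := fun h => hzB (h ▸ hb'B)
  have hBconn : ConnOn G B := connOn_iff.mpr hB.1
  set C : Set V := B ∪ {x | x ∈ q'.support} with hCdef
  have hBC : B ⊆ C := Set.subset_union_left
  have hzC : z ∈ C := Or.inr q'.start_mem_support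
  have hvC : v ∈ C := hBC hv
  -- walk from any vertex of the ear back to v, within the ear plus v
  have earwalk : ∀ m, (hm : m ∈ q'.support) → ∃ p : G.Walk m v,
      ∀ x ∈ p.support, (x ∈ q'.support ∧ x ∈ (q'.takeUntil m hm).support) ∨ x = v := by
    intro m hm
    refine ⟨(q'.takeUntil m hm).reverse.append (SimpleGraph.Walk.cons hadj.symm SimpleGraph.Walk.nil), ?_⟩
    intro x hx
    rw [SimpleGraph.Walk.mem_support_append_iff] at hx
    rcases hx with hx | hx
    · rw [SimpleGraph.Walk.support_reverse, List.mem_reverse] at hx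
      exact Or.inl ⟨q'.support_takeUntil_subset hm hx, hx⟩
    · simp only [SimpleGraph.Walk.support_cons, SimpleGraph.Walk.support_nil] at hx
      rcases List.mem_cons.mp hx with rfl | hx
      · exact Or.inl ⟨q'.start_mem_support, SimpleGraph.Walk.start_mem_support _⟩
      · exact Or.inr (List.mem_singleton.mp hx)
  have hCconn : ConnOn G C := by
    refine connOn_of_hub hvC ?_
    intro a ha
    rcases ha with haB | haq
    · obtain ⟨p, hp⟩ := hBconn.2 a haB v hv
      exact ⟨p, fun x hx => hBC (hp x hx)⟩
    · obtain ⟨p, hp⟩ := earwalk a haq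
      refine ⟨p, fun x hx => ?_⟩
      rcases hp x hx with ⟨h1, -⟩ | rfl
      · exact Or.inr h1
      · exact hvC
  have hCnocut : ∀ c₀ ∈ C, ConnOn G (C \ {c₀}) := by
    intro c₀ hc₀
    by_cases hc₀B : c₀ ∈ B
    · by_cases hc₀b' : c₀ = b'
      · -- removed b' : go back to z and then to v
        refine connOn_of_hub (h := v) ⟨hvC, fun h => hb'v (hc₀b' ▸ (Set.mem_singleton_iff.mp h).symm)⟩ ?_
        rintro a ⟨haC, hac⟩
        have hac' : a ≠ c₀ := fun h => hac (Set.mem_singleton_iff.mpr h)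
        rcases haC with haB | haq
        · obtain ⟨p, hp⟩ := (B_minus_connOn hB hex hc₀B).2 a ⟨haB, hac'⟩ v
            ⟨hv, fun h => hb'v (hc₀b' ▸ (Set.mem_singleton_iff.mp h).symm)⟩
          exact ⟨p, fun x hx => ⟨hBC (hp x hx).1, (hp x hx).2⟩⟩
        · obtain ⟨p, hp⟩ := earwalk a haq
          refine ⟨p, fun x hx => ?_⟩
          rcases hp x hx with ⟨h1, h2⟩ | rfl
          · refine ⟨Or.inr h1, fun hxc => ?_⟩
            have hxb' : x = b' := hc₀b' ▸ Set.mem_singleton_iff.mp hxc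
            have hab' : a ≠ b' := fun h => hac' (h.trans hc₀b'.symm)
            exact ne_end_not_mem_takeUntil hq'path haq hab' (hxb' ▸ h2)
          · exact ⟨hvC, fun h => hb'v (hc₀b' ▸ (Set.mem_singleton_iff.mp h).symm)⟩
      · by_cases hc₀v : c₀ = v
        · -- removed v : go forward to b'
          refine connOn_of_hub (h := b') ⟨hBC hb'B, fun h => hc₀b' (Set.mem_singleton_iff.mp h).symm⟩ ?_
          rintro a ⟨haC, hac⟩
          have hac' : a ≠ c₀ := fun h => hac (Set.mem_singleton_iff.mpr h)
          rcases haC with haB | haq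
          · obtain ⟨p, hp⟩ := (B_minus_connOn hB hex hc₀B).2 a ⟨haB, hac'⟩ b'
              ⟨hb'B, fun h => hc₀b' ((Set.mem_singleton_iff.mp h).symm)⟩
            exact ⟨p, fun x hx => ⟨hBC (hp x hx).1, (hp x hx).2⟩⟩
          · refine ⟨q'.dropUntil a haq, fun x hx => ?_⟩
            have hxq := q'.support_dropUntil_subset haq hx
            exact ⟨Or.inr hxq, fun hxv =>
              hvq' (hc₀v ▸ Set.mem_singleton_iff.mp hxv ▸ hxq)⟩
        · -- removed some other vertex of B ; it is not on the ear
          have hc₀q : c₀ ∉ q'.support := fun h => hc₀b' (hq'B c₀ h hc₀B)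
          refine connOn_of_hub (h := v) ⟨hvC, fun h => hc₀v (Set.mem_singleton_iff.mp h).symm⟩ ?_
          rintro a ⟨haC, hac⟩
          have hac' : a ≠ c₀ := fun h => hac (Set.mem_singleton_iff.mpr h)
          rcases haC with haB | haq
          · obtain ⟨p, hp⟩ := (B_minus_connOn hB hex hc₀B).2 a ⟨haB, hac'⟩ v
              ⟨hv, fun h => hc₀v h.symm⟩
            exact ⟨p, fun x hx => ⟨hBC (hp x hx).1, (hp x hx).2⟩⟩
          · obtain ⟨p, hp⟩ := earwalk a haq
            refine ⟨p, fun x hx => ?_⟩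
            rcases hp x hx with ⟨h1, -⟩ | rfl
            · exact ⟨Or.inr h1, fun hxc => hc₀q (Set.mem_singleton_iff.mp hxc ▸ h1)⟩
            · exact ⟨hvC, fun h => hc₀v (Set.mem_singleton_iff.mp h).symm⟩
    · -- removed vertex not in B : it lies on the ear (or nowhere)
      have hvc₀ : v ≠ c₀ := fun h => hc₀B (h ▸ hv)
      refine connOn_of_hub (h := v) ⟨hvC, fun h => hvc₀ (Set.mem_singleton_iff.mp h)⟩ ?_
      rintro a ⟨haC, hac⟩
      have hac' : a ≠ c₀ := fun h => hac (Set.mem_singleton_iff.mpr h)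
      rcases haC with haB | haq
      · obtain ⟨p, hp⟩ := hBconn.2 a haB v hv
        exact ⟨p, fun x hx => ⟨hBC (hp x hx),
          fun h => hc₀B (Set.mem_singleton_iff.mp h ▸ hp x hx)⟩⟩
      · have hc₀q : c₀ ∈ q'.support := by
          rcases hc₀ with h | h
          · exact absurd h hc₀B
          · exact h
        rcases path_split hq'path hc₀q haq hac' with ⟨w, hwc, hwsub⟩ | ⟨w, hwc, hwsub⟩
        · -- w : z → a avoiding c₀ ; reverse, then z → v
          have hzc₀ : z ≠ c₀ := fun h => hwc (h ▸ w.start_mem_support)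
          refine ⟨w.reverse.append (SimpleGraph.Walk.cons hadj.symm SimpleGraph.Walk.nil), ?_⟩
          intro x hx
          rw [SimpleGraph.Walk.mem_support_append_iff] at hx
          rcases hx with hx | hx
          · rw [SimpleGraph.Walk.support_reverse, List.mem_reverse] at hx
            exact ⟨Or.inr (hwsub x hx), fun h => hwc (Set.mem_singleton_iff.mp h ▸ hx)⟩
          · simp only [SimpleGraph.Walk.support_cons, SimpleGraph.Walk.support_nil] at hx
            rcases List.mem_cons.mp hx with rfl | hx
            · exact ⟨Or.inr (hwsub _ w.start_mem_support), fun h => hzc₀ (Set.mem_singleton_iff.mp h)⟩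
            · rw [List.mem_singleton.mp hx]
              exact ⟨hvC, fun h => hvc₀ (Set.mem_singleton_iff.mp h)⟩
        · -- w : a → b' avoiding c₀, then b' → v in B
          obtain ⟨p, hp⟩ := hBconn.2 b' hb'B v hv
          refine ⟨w.append p, ?_⟩
          intro x hx
          rw [SimpleGraph.Walk.mem_support_append_iff] at hx
          rcases hx with hx | hx
          · exact ⟨Or.inr (hwsub x hx), fun h => hwc (Set.mem_singleton_iff.mp h ▸ hx)⟩
          · exact ⟨hBC (hp x hx), fun h => hc₀B (Set.mem_singleton_iff.mp h ▸ hp x hx)⟩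
  -- `C` is bigger than `B`, connected, without cutvertices : contradiction with maximality
  have hCB : C = B := by
    refine hB.2.2 C hBC (connOn_iff.mp hCconn) ?_
    rintro ⟨c₀, hc₀⟩ ⟨-, -, hnc⟩
    apply hnc
    rw [induce_induce_connected_iff]
    have hset : (Subtype.val '' {u : ↥C | u ≠ ⟨c₀, hc₀⟩} : Set V) = C \ {c₀} := by
      ext x
      constructor
      · rintro ⟨⟨x, hxC⟩, hx, rfl⟩
        exact ⟨hxC, fun h => hx (Subtype.ext h)⟩
      · rintro ⟨hxC, hxc⟩
        exact ⟨⟨x, hxC⟩, fun h => hxc (congrArg Subtype.val h), rfl⟩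
    rw [hset]
    exact hCnocut c₀ hc₀
  exact hzB (hCB ▸ hzC)

end MyAux4
section MyAux5
variable {G : SimpleGraph V} {B : Set V}

lemma crossing_a (hG : G.Connected) (hB : IsBlock G B) (hex : ∀ c : V, ∃ b ∈ B, b ≠ c)
    {v w z : V} (hv : v ∈ B) (hw : w ∈ Sv G B v) (hz : z ∉ Wst G B)
    (hadj : (GraphSquare G).Adj w z) : z ∈ B := by
  have hzv_or : ∀ {z' : V}, G.Adj w z' → z' ∉ Wst G B → z' ∈ B ∨ z' = v := by
    intro z' ha hz'
    by_cases h : z' = v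
    · exact Or.inr h
    · exact absurd ⟨v, hv, Sv_closure hw ha h⟩ hz'
  obtain ⟨-, hcase⟩ := (show w ≠ z ∧ (G.Adj w z ∨ ∃ m, G.Adj w m ∧ G.Adj m z) from hadj)
  rcases hcase with h | ⟨m, h1, h2⟩
  · rcases hzv_or h hz with h' | rfl
    · exact h'
    · exact hv
  · by_cases hmv : m = v
    · exact ear hG hB hex hv (hmv ▸ h2) hz
    · have hm : m ∈ Sv G B v := Sv_closure hw h1 hmv
      by_cases hzv : z = v
      · exact hzv ▸ hv
      · exact absurd ⟨v, hv, Sv_closure hm h2 hzv⟩ hz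

end MyAux5

/-- Let `r ≥ 3` and let `G` be a connected graph containing a cycle `C_r` as a block all of
whose `r` vertices are cutvertices of `G`. Then for any two distinct vertices `x`, `y` of
this cycle there is no `xy`-hamiltonian path in `G²`; in particular `G²` is not hamiltonian
connected. -/
theorem square_not_hamiltonian_connected_of_cycle_block [Fintype V]
    (G : SimpleGraph V) (hG : G.Connected)
    (r : ℕ) (hr : 3 ≤ r) (B : Set V) (hB : IsBlock G B)
    (hiso : Nonempty (G.induce B ≃g cycleGraph r))
    (hcut : ∀ v ∈ B, IsCutVertex G v) :
    (∀ x ∈ B, ∀ y ∈ B, x ≠ y → ¬ HasHamiltonianPath (GraphSquare G) x y) ∧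
      ¬ HamiltonianConnected (GraphSquare G) := by
  classical
  obtain ⟨iso⟩ := hiso
  have hBfin : B.Finite := Set.toFinite B
  set Bf : Finset V := hBfin.toFinset with hBfdef
  have hmemBf : ∀ {a : V}, a ∈ Bf ↔ a ∈ B := fun {a} => Set.Finite.mem_toFinset _
  have hcardBf : Bf.card = r := by
    rw [← Set.ncard_eq_toFinset_card B hBfin, ← Nat.card_coe_set_eq]
    rw [Nat.card_congr iso.toEquiv, Nat.card_eq_fintype_card, Fintype.card_fin]
  have hex : ∀ c : V, ∃ b ∈ B, b ≠ c := by
    intro c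
    obtain ⟨b, hb, hbc⟩ := Finset.exists_mem_ne (by omega : 1 < Bf.card) c
    exact ⟨b, hmemBf.mp hb, hbc⟩
  have main : ∀ x ∈ B, ∀ y ∈ B, x ≠ y → ¬ HasHamiltonianPath (GraphSquare G) x y := by
    intro x hx y hy hxy hham
    obtain ⟨p, hp⟩ := hham
    set L : List V := p.support with hLdef
    set n : ℕ := L.length with hndef
    have hnodup : L.Nodup := by
      rw [List.nodup_iff_count_le_one]
      intro a
      exact le_of_eq (hp a)
    have hmem : ∀ a : V, a ∈ L := by
      intro a
      have : 0 < L.count a := by rw [hp a]; norm_num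
      exact List.count_pos_iff.mp this
    set g : ℕ → V := fun m => L.getD m x with hgdef
    have hn1 : 1 ≤ n := by
      have := hmem x
      have : L ≠ [] := List.ne_nil_of_mem this
      have := List.length_pos_iff.mpr this
      omega
    have hgetD : ∀ {m : ℕ} (hm : m < n), g m = L.get ⟨m, hm⟩ := by
      intro m hm
      simp only [hgdef]
      rw [List.getD_eq_getElem L x hm]
      simp
    have hg0 : g 0 = x := by
      show L.getD 0 x = x
      have hc : p.support = x :: p.support.tail := p.support_eq_cons
      rw [hLdef, hc]
      simp
    have hglast : g (n-1) = y := by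
      have hLne : L ≠ [] := List.ne_nil_of_mem (hmem x)
      have h2 : L.getLast hLne = y := p.getLast_support
      rw [hgetD (show n - 1 < n by omega)]
      rw [List.getLast_eq_getElem] at h2
      simpa using h2
    have hginj : ∀ {a b : ℕ}, a < n → b < n → g a = g b → a = b := by
      intro a b ha hb hab
      rw [hgetD ha, hgetD hb] at hab
      have := (hnodup.get_inj_iff).mp hab
      exact congrArg Fin.val this
    have hadjg : ∀ m : ℕ, m + 1 < n → (GraphSquare G).Adj (g m) (g (m+1)) := by
      intro m hm
      have hchain := p.isChain_adj_support
      rw [List.isChain_iff_getElem] at hchain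
      have := hchain m (by rw [← hLdef, ← hndef]; omega)
      rw [hgetD (by omega : m < n), hgetD hm]
      exact this
    have hxW : x ∉ Wst G B := fun h => Wst_not_mem_B h hx
    have hyW : y ∉ Wst G B := fun h => Wst_not_mem_B h hy
    -- key construction : entry and exit indices for each cycle vertex
    have key : ∀ v : V, ∃ j k : ℕ, v ∈ B →
        (j + 1 < n ∧ 1 ≤ k ∧ k ≤ n - 1 ∧ g j ∈ B ∧ g k ∈ B ∧
          g (j+1) ∈ Sv G B v ∧ g (k-1) ∈ Sv G B v) := by
      intro v
      by_cases hv : v ∈ B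
      swap
      · exact ⟨0, 0, fun h => absurd h hv⟩
      obtain ⟨wv, hwv⟩ := Sv_nonempty hB hex hv (hcut v hv)
      obtain ⟨⟨iv, hivn⟩, hgiv⟩ := List.mem_iff_get.mp (hmem wv)
      rw [← hndef] at hivn
      have hgiv' : g iv = wv := by rw [hgetD hivn]; exact hgiv
      have hwW : wv ∈ Wst G B := ⟨v, hv, hwv⟩
      -- leftward : largest index ≤ iv outside W
      set P : ℕ → Prop := fun m => g m ∉ Wst G B with hPdef
      have hP0 : P 0 := by rw [hPdef]; simpa [hg0] using hxW
      set j : ℕ := Nat.findGreatest P iv with hjdef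
      have hPj : P j := Nat.findGreatest_spec (Nat.zero_le iv) hP0
      have hjle : j ≤ iv := Nat.findGreatest_le iv
      have hjlt : j < iv := by
        rcases Nat.lt_or_ge j iv with h | h
        · exact h
        · exfalso
          have : j = iv := le_antisymm hjle h
          rw [this] at hPj
          exact hPj (hgiv' ▸ hwW)
      have hbetween : ∀ m, j < m → m ≤ iv → g m ∈ Wst G B := by
        intro m h1 h2
        by_contra h
        exact (Nat.findGreatest_is_greatest h1 h2) h
      have claimA : ∀ d m, m = iv - d → j < m → g m ∈ Sv G B v := by
        intro d
        induction d with
        | zero => intro m hm _; rw [hm]; simpa using (hgiv' ▸ hwv)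
        | succ d ih =>
          intro m hm hjm
          have hm1 : m + 1 = iv - d := by omega
          have hmiv : m < iv := by omega
          have hnext : g (m+1) ∈ Sv G B v := ih (m+1) hm1 (by omega)
          obtain ⟨u, huB, hmu⟩ := hbetween m hjm (by omega)
          have hadj := hadjg m (by omega)
          exact (crossing_b hG huB hv hmu hnext hadj) ▸ hmu
      have hj1 : g (j+1) ∈ Sv G B v := claimA (iv - (j+1)) (j+1) (by omega) (by omega)
      have hj1n : j + 1 < n := by omega
      have hgjB : g j ∈ B :=
        crossing_a hG hB hex hv hj1 hPj ((hadjg j hj1n).symm)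
      -- rightward : smallest index ≥ iv outside W
      have hivle : iv ≤ n - 1 := by omega
      have hexQ : ∃ t, g (iv + t) ∉ Wst G B := by
        refine ⟨n - 1 - iv, ?_⟩
        have : iv + (n - 1 - iv) = n - 1 := by omega
        rw [this, hglast]
        exact hyW
      set tk : ℕ := Nat.find hexQ with htkdef
      have hQk : g (iv + tk) ∉ Wst G B := Nat.find_spec hexQ
      have htkpos : 1 ≤ tk := by
        rcases Nat.eq_zero_or_pos tk with h | h
        · exfalso; rw [h] at hQk; simp at hQk; exact hQk (hgiv' ▸ hwW)
        · exact h
      have htkle : tk ≤ n - 1 - iv := Nat.find_min' hexQ (by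
        have : iv + (n - 1 - iv) = n - 1 := by omega
        rw [this, hglast]; exact hyW)
      set k : ℕ := iv + tk with hkdef
      have hkle : k ≤ n - 1 := by omega
      have claimB : ∀ t, t < tk → g (iv + t) ∈ Sv G B v := by
        intro t
        induction t with
        | zero => intro _; simpa using (hgiv' ▸ hwv)
        | succ t ih =>
          intro ht
          have hprev : g (iv + t) ∈ Sv G B v := ih (by omega)
          have hW : g (iv + t + 1) ∈ Wst G B := by
            by_contra h
            have := Nat.find_min' hexQ (m := t + 1) h
            omega
          obtain ⟨u, huB, hmu⟩ := hW
          have hadj := hadjg (iv + t) (by omega)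
          have heq : iv + (t+1) = iv + t + 1 := rfl
          rw [heq]
          exact (crossing_b hG hv huB hprev hmu hadj).symm ▸ hmu
      have hk1 : g (k-1) ∈ Sv G B v := by
        have : k - 1 = iv + (tk - 1) := by omega
        rw [this]
        exact claimB (tk - 1) (by omega)
      have hgkB : g k ∈ B := by
        have hadj := hadjg (k-1) (by omega)
        have hkk : k - 1 + 1 = k := by omega
        rw [hkk] at hadj
        exact crossing_a hG hB hex hv hk1 hQk hadj
      exact ⟨j, k, fun _ => ⟨hj1n, by omega, hkle, hgjB, hgkB, hj1, hk1⟩⟩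
    choose jf kf hkey using key
    -- counting
    set D : Finset (V × Bool) := Bf ×ˢ (Finset.univ : Finset Bool) with hDdef
    set T : Finset (V × Bool) :=
      ((Bf ×ˢ (Finset.univ : Finset Bool)).erase (y, false)).erase (x, true) with hTdef
    set F : V × Bool → V × Bool :=
      fun q => (if q.2 then g (kf q.1) else g (jf q.1), q.2) with hFdef
    have hmaps : ∀ q ∈ D, F q ∈ T := by
      rintro ⟨v, d⟩ hq
      rw [hDdef, Finset.mem_product] at hq
      have hv : v ∈ B := hmemBf.mp hq.1
      obtain ⟨hj1n, hk1, hkle, hgjB, hgkB, hgj1, hgk1⟩ := hkey v hv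
      rw [hTdef, Finset.mem_erase, Finset.mem_erase, Finset.mem_product]
      rcases d with _ | _
      · -- d = false : uses jf
        refine ⟨?_, ?_, ?_, by simp [hFdef]⟩
        · simp only [hFdef]
          intro h
          exact absurd (congrArg Prod.snd h) (by simp)
        · simp only [hFdef]
          intro h
          have h1 : g (jf v) = y := by simpa using congrArg Prod.fst h
          have := hginj (by omega : jf v < n) (by omega : n - 1 < n) (h1.trans hglast.symm)
          omega
        · simp only [hFdef, hmemBf]
          simpa using hgjB
      · -- d = true : uses kf
        refine ⟨?_, ?_, ?_, by simp [hFdef]⟩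
        · simp only [hFdef]
          intro h
          have h1 : g (kf v) = x := by simpa using congrArg Prod.fst h
          have := hginj (by omega : kf v < n) (by omega : (0:ℕ) < n) (h1.trans hg0.symm)
          omega
        · simp only [hFdef]
          intro h
          exact absurd (congrArg Prod.snd h) (by simp)
        · simp only [hFdef, hmemBf]
          simpa using hgkB
    have hinj : Set.InjOn F D := by
      rintro ⟨v, d⟩ hq ⟨v', d'⟩ hq' heq
      rw [hDdef, Finset.coe_product] at hq hq'
      have hv : v ∈ B := hmemBf.mp (by exact_mod_cast hq.1)
      have hv' : v' ∈ B := hmemBf.mp (by exact_mod_cast hq'.1)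
      obtain ⟨hj1n, hk1, hkle, hgjB, hgkB, hgj1, hgk1⟩ := hkey v hv
      obtain ⟨hj1n', hk1', hkle', hgjB', hgkB', hgj1', hgk1'⟩ := hkey v' hv'
      have hd : d = d' := by simpa [hFdef] using congrArg Prod.snd heq
      subst hd
      have hfst := congrArg Prod.fst heq
      simp only [hFdef] at hfst
      rcases d with _ | _
      · simp only [Bool.false_eq_true, if_neg] at hfst
        have hjj : jf v = jf v' := hginj (by omega) (by omega) (by simpa using hfst)
        have : g (jf v + 1) ∈ Sv G B v' := by rw [hjj]; exact hgj1'
        have hvv : v = v' := by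
          by_contra hne
          exact Sv_disjoint hG hv hv' hne hgj1 this
        simp [hvv]
      · simp only [if_pos] at hfst
        have hkk : kf v = kf v' := hginj (by omega) (by omega) (by simpa using hfst)
        have : g (kf v - 1) ∈ Sv G B v' := by rw [hkk]; exact hgk1'
        have hvv : v = v' := by
          by_contra hne
          exact Sv_disjoint hG hv hv' hne hgk1 this
        simp [hvv]
    have hcardD : D.card = 2 * r := by
      rw [hDdef, Finset.card_product, hcardBf]
      simp [Nat.mul_comm]
    have hcardT : T.card = 2 * r - 2 := by
      have hyf : (y, false) ∈ Bf ×ˢ (Finset.univ : Finset Bool) := by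
        rw [Finset.mem_product]; exact ⟨hmemBf.mpr hy, Finset.mem_univ _⟩
      have hxt : (x, true) ∈ (Bf ×ˢ (Finset.univ : Finset Bool)).erase (y, false) := by
        rw [Finset.mem_erase]
        refine ⟨by simp, ?_⟩
        rw [Finset.mem_product]; exact ⟨hmemBf.mpr hx, Finset.mem_univ _⟩
      rw [hTdef, Finset.card_erase_of_mem hxt, Finset.card_erase_of_mem hyf,
        Finset.card_product, hcardBf]
      simp only [Finset.card_univ, Fintype.card_bool]
      omega
    have := Finset.card_le_card_of_injOn F hmaps hinj
    omega
  refine ⟨main, ?_⟩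
  intro hHC
  obtain ⟨x, hx, y, hy, hxy⟩ := Finset.one_lt_card.mp (by omega : 1 < Bf.card)
  exact main x (hmemBf.mp hx) y (hmemBf.mp hy) hxy (hHC x y hxy)
end
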